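/- arXiv:2103.10152 — 3 statements merged into one kernel-verified Lean document; each statement's English description precedes it below -/
import Mathlib

section
/- Let Φ:[0,∞)→[0,∞) be strictly increasing with Φ(0)=0 and satisfy the global weak scaling condition: there exist α₂≥α₁>0 and c₁,c₂>0 with c₁(R/r)^{α₁} ≤ Φ(R)/Φ(r) ≤ c₂(R/r)^{α₂} for all 0<r≤R. Then there exists a strictly increasing differentiable function Φ̃:(0,∞)→(0,∞) such that: (P1) Φ(r) ≃ Φ̃(r) for all r>0 (i.e. the ratio is bounded above and below by positive constants) and Φ̃ satisfies the same weak scaling condition with indices α₁,α₂ (with possibly different constants); and (P2) Φ̃′(r) ≃ r^{−1}Φ̃(r) for all r>0 and (Φ̃^{−1})′(t) ≃ t^{−1}Φ̃^{−1}(t) for all t>0, where Φ̃^{−1} is the inverse of Φ̃. -/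
open MeasureTheory Real Set
open intervalIntegral Filter

private lemma aux_div_swap (a b r g : ℝ) (ha : a ≠ 0) (hb : b ≠ 0) (hg : g ≠ 0) :
    a / b * (r / g) = r / (b / a * g) := by
  field_simp

/-- Lemma 3.1: for a strictly increasing `Φ : [0,∞) → [0,∞)` with `Φ(0) = 0` satisfying
a global weak scaling condition with indices `α₁ ≤ α₂`, there is a strictly increasing
differentiable function `Φ̃` (with inverse `Φ̃⁻¹`) comparable to `Φ`, satisfying the same
weak scaling condition, and with `Φ̃'(r) ≍ Φ̃(r)/r` and `(Φ̃⁻¹)'(t) ≍ Φ̃⁻¹(t)/t`. -/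
theorem exists_smooth_scale_function
    (Φ : ℝ → ℝ) (α₁ α₂ c₁ c₂ : ℝ)
    (hα₁ : 0 < α₁) (hα : α₁ ≤ α₂) (hc₁ : 0 < c₁) (hc₂ : 0 < c₂)
    (hΦ0 : Φ 0 = 0) (hΦmono : StrictMonoOn Φ (Set.Ici 0))
    (hscale : ∀ r R : ℝ, 0 < r → r ≤ R →
      c₁ * (R / r) ^ α₁ ≤ Φ R / Φ r ∧ Φ R / Φ r ≤ c₂ * (R / r) ^ α₂) :
    ∃ Φt ΦtInv : ℝ → ℝ,
      StrictMonoOn Φt (Set.Ioi 0) ∧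
      (∀ r : ℝ, 0 < r → DifferentiableAt ℝ Φt r) ∧
      -- (P1): comparability with Φ
      (∃ a b : ℝ, 0 < a ∧ 0 < b ∧ ∀ r : ℝ, 0 < r →
        a * Φt r ≤ Φ r ∧ Φ r ≤ b * Φt r) ∧
      -- (P1): weak scaling with the same indices
      (∃ c₁' c₂' : ℝ, 0 < c₁' ∧ 0 < c₂' ∧ ∀ r R : ℝ, 0 < r → r ≤ R →
        c₁' * (R / r) ^ α₁ ≤ Φt R / Φt r ∧ Φt R / Φt r ≤ c₂' * (R / r) ^ α₂) ∧
      -- ΦtInv is the inverse of Φt on (0,∞)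
      (∀ r : ℝ, 0 < r → ΦtInv (Φt r) = r) ∧
      (∀ t : ℝ, 0 < t → 0 < ΦtInv t ∧ Φt (ΦtInv t) = t) ∧
      -- (P2): derivative comparability for Φt
      (∃ a b : ℝ, 0 < a ∧ 0 < b ∧ ∀ r : ℝ, 0 < r →
        a * (Φt r / r) ≤ deriv Φt r ∧ deriv Φt r ≤ b * (Φt r / r)) ∧
      -- (P2): derivative comparability for the inverse
      (∃ a b : ℝ, 0 < a ∧ 0 < b ∧ ∀ t : ℝ, 0 < t →
        a * (ΦtInv t / t) ≤ deriv ΦtInv t ∧ deriv ΦtInv t ≤ b * (ΦtInv t / t)) := by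
  have hΦpos : ∀ r : ℝ, 0 < r → 0 < Φ r := by
    intro r hr
    have := hΦmono (mem_Ici.2 le_rfl) (mem_Ici.2 hr.le) hr
    rwa [hΦ0] at this
  have hΦub : ∀ T : ℝ, 0 < T → ∀ s : ℝ, 0 < s → s ≤ T →
      Φ s ≤ Φ T / (c₁ * T ^ α₁) * s ^ α₁ := by
    intro T hT s hs hsT
    have h1 := (hscale s T hs hsT).1
    rw [Real.div_rpow hT.le hs.le] at h1
    have hTα : (0:ℝ) < T ^ α₁ := rpow_pos_of_pos hT _
    have hsα : (0:ℝ) < s ^ α₁ := rpow_pos_of_pos hs _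
    rw [le_div_iff₀ (hΦpos s hs)] at h1
    rw [div_mul_eq_mul_div, le_div_iff₀ (by positivity)]
    calc Φ s * (c₁ * T ^ α₁) = (c₁ * (T ^ α₁ / s ^ α₁) * Φ s) * s ^ α₁ := by
          field_simp
      _ ≤ Φ T * s ^ α₁ := by gcongr
  have hΦdbl : ∀ s R : ℝ, 0 < s → s ≤ R → Φ R ≤ c₂ * (R / s) ^ α₂ * Φ s := by
    intro s R hs hsR
    have h2 := (hscale s R hs hsR).2
    rwa [div_le_iff₀ (hΦpos s hs)] at h2
  have hΦgrow : ∀ r : ℝ, 1 ≤ r → c₁ * r ^ α₁ * Φ 1 ≤ Φ r := by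
    intro r hr
    have h3 := (hscale 1 r one_pos hr).1
    rw [div_one] at h3
    rw [le_div_iff₀ (hΦpos 1 one_pos)] at h3
    exact h3
  have hΦmono' : MonotoneOn Φ (Set.Ici 0) := hΦmono.monotoneOn
  set g : ℝ → ℝ := (Set.Ioi (0:ℝ)).indicator (fun s => Φ (max s 0) / s) with hg_def
  have hg_eval : ∀ s : ℝ, 0 < s → g s = Φ s / s := by
    intro s hs
    rw [hg_def, Set.indicator_of_mem (mem_Ioi.2 hs), max_eq_left hs.le]
  have hg_zero : ∀ s : ℝ, s ≤ 0 → g s = 0 := by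
    intro s hs
    rw [hg_def, Set.indicator_of_notMem (by simpa using not_lt.2 hs)]
  have hg_nonneg : ∀ s, 0 ≤ g s := by
    intro s
    rcases le_or_gt s 0 with h | h
    · rw [hg_zero s h]
    · rw [hg_eval s h]; exact div_nonneg (hΦpos s h).le h.le
  have hg_meas : Measurable g := by
    have hmono : Monotone fun s : ℝ => Φ (max s 0) := fun x y hxy =>
      hΦmono' (mem_Ici.2 (le_max_right _ _)) (mem_Ici.2 (le_max_right _ _))
        (max_le_max hxy le_rfl)
    exact (hmono.measurable.div measurable_id).indicator measurableSet_Ioi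
  -- pointwise bound for g
  have hgb : ∀ T : ℝ, 0 < T → ∀ s ∈ Set.Ioc (0:ℝ) T,
      g s ≤ Φ T / (c₁ * T ^ α₁) * s ^ (α₁ - 1) := by
    intro T hT s hs
    rw [hg_eval s hs.1, Real.rpow_sub hs.1, Real.rpow_one, ← mul_div_assoc]
    have h := hΦub T hT s hs.1 hs.2
    gcongr
    exact hs.1.le
  -- generic interval integrability builder
  have build : ∀ f : ℝ → ℝ, (∀ s, s ≤ 0 → f s = 0) →
      (∀ T, 0 < T → IntegrableOn f (Set.Ioc 0 T) volume) →
      ∀ a b : ℝ, IntervalIntegrable f volume a b := by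
    intro f hf0 hfT
    have key : ∀ a b : ℝ, a ≤ b → IntervalIntegrable f volume a b := by
      intro a b hab
      rw [intervalIntegrable_iff, uIoc_of_le hab]
      have h1 : IntegrableOn f (Set.Iic 0) volume :=
        (integrableOn_congr_fun (g := fun _ => (0:ℝ)) (fun s hs => hf0 s hs)
          measurableSet_Iic).2 integrableOn_zero
      have h2 := hfT (max b 1) (by positivity)
      refine (h1.union h2).mono_set ?_
      intro s hs
      rcases le_or_gt s 0 with h | h
      · exact Or.inl h
      · exact Or.inr ⟨h, hs.2.trans (le_max_left _ _)⟩
    intro a b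
    rcases le_total a b with h | h
    · exact key a b h
    · exact (key b a h).symm
  have hgOn : ∀ T : ℝ, 0 < T → IntegrableOn g (Set.Ioc 0 T) volume := by
    intro T hT
    have hB : IntegrableOn (fun s : ℝ => Φ T / (c₁ * T ^ α₁) * s ^ (α₁ - 1))
        (Set.Ioc 0 T) volume :=
      ((intervalIntegral.intervalIntegrable_rpow' (by linarith)).const_mul _).1
    refine MeasureTheory.Integrable.mono' hB (hg_meas.aestronglyMeasurable.restrict) ?_
    rw [ae_restrict_iff' measurableSet_Ioc]
    filter_upwards with s hs
    rw [Real.norm_of_nonneg (hg_nonneg s)]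
    exact hgb T hT s hs
  have hgint : ∀ a b : ℝ, IntervalIntegrable g volume a b := build g hg_zero hgOn
  -- the first primitive
  set F : ℝ → ℝ := fun r => ∫ s in (0:ℝ)..r, g s with hF_def
  have hFcont : Continuous F := intervalIntegral.continuous_primitive hgint 0
  have hFadd : ∀ s t : ℝ, F s + ∫ u in s..t, g u = F t := by
    intro s t
    exact intervalIntegral.integral_add_adjacent_intervals (hgint 0 s) (hgint s t)
  have hFmono : Monotone F := by
    intro s t hst
    have h1 : 0 ≤ ∫ u in s..t, g u :=
      intervalIntegral.integral_nonneg hst (fun u _ => hg_nonneg u)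
    have := hFadd s t
    linarith
  have hF_nonneg : ∀ r, 0 ≤ F r := by
    intro r
    rcases le_or_gt r 0 with h | h
    · have hz : ∫ s in r..(0:ℝ), g s = 0 := by
        rw [intervalIntegral.integral_congr (g := fun _ => (0:ℝ))
          (fun x hx => hg_zero x (by rw [uIcc_of_le h] at hx; exact hx.2))]
        simp
      have : F r = 0 := by
        rw [hF_def]
        simp only []
        rw [intervalIntegral.integral_symm, hz, neg_zero]
      rw [this]
    · have h0 : F 0 ≤ F r := hFmono h.le
      simpa [hF_def] using h0
  -- upper bound for F
  have hFub : ∀ r : ℝ, 0 < r → F r ≤ Φ r / (c₁ * α₁) := by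
    intro r hr
    set C := Φ r / (c₁ * r ^ α₁) with hC
    have hC0 : 0 ≤ C := div_nonneg (hΦpos r hr).le (by positivity)
    have hint2 : IntervalIntegrable (fun s : ℝ => C * s ^ (α₁ - 1)) volume 0 r :=
      (intervalIntegral.intervalIntegrable_rpow' (by linarith)).const_mul _
    have hmono := intervalIntegral.integral_mono_on hr.le (hgint 0 r) hint2 ?ptwise
    case ptwise =>
      intro x hx
      rcases eq_or_lt_of_le hx.1 with h | h
      · rw [hg_zero x h.symm.le]
        positivity
      · exact hgb r hr x ⟨h, hx.2⟩
    have hcalc : ∫ s in (0:ℝ)..r, C * s ^ (α₁ - 1) = Φ r / (c₁ * α₁) := by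
      rw [intervalIntegral.integral_const_mul, integral_rpow (Or.inl (by linarith))]
      have h1 : α₁ - 1 + 1 = α₁ := by ring
      rw [h1, Real.zero_rpow (ne_of_gt hα₁)]
      have hrα : (0:ℝ) < r ^ α₁ := rpow_pos_of_pos hr _
      rw [hC]
      field_simp
      ring
    calc F r ≤ ∫ s in (0:ℝ)..r, C * s ^ (α₁ - 1) := hmono
      _ = Φ r / (c₁ * α₁) := hcalc
  -- lower bound for F
  have hFlb : ∀ r : ℝ, 0 < r → Φ (r / 2) / 2 ≤ F r := by
    intro r hr
    have hhalf : (0:ℝ) < r / 2 := by linarith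
    have h1 : 0 ≤ F (r / 2) := hF_nonneg _
    have h2 : (Φ (r / 2) / r) * (r - r / 2) ≤ ∫ u in (r/2)..r, g u := by
      have hmono := intervalIntegral.integral_mono_on (by linarith : r/2 ≤ r)
        (_root_.intervalIntegrable_const (c := Φ (r / 2) / r)) (hgint (r/2) r) ?ptw
      case ptw =>
        intro x hx
        rw [hg_eval x (lt_of_lt_of_le hhalf hx.1)]
        exact div_le_div₀ (hΦpos x (lt_of_lt_of_le hhalf hx.1)).le
          (hΦmono' (mem_Ici.2 hhalf.le) (mem_Ici.2 (lt_of_lt_of_le hhalf hx.1).le) hx.1)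
          (lt_of_lt_of_le hhalf hx.1) hx.2
      rw [intervalIntegral.integral_const] at hmono
      calc (Φ (r / 2) / r) * (r - r / 2) = (r - r/2) • (Φ (r / 2) / r) := by
            rw [smul_eq_mul]; ring
        _ ≤ _ := hmono
    have h3 := hFadd (r/2) r
    have h4 : (Φ (r / 2) / r) * (r - r / 2) = Φ (r / 2) / 2 := by
      field_simp
      ring
    linarith
  -- comparability constants
  set K₁ : ℝ := (2 * (c₂ * 2 ^ α₂))⁻¹ with hK₁
  set K₂ : ℝ := (c₁ * α₁)⁻¹ with hK₂
  have h2α : (0:ℝ) < 2 ^ α₂ := rpow_pos_of_pos two_pos _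
  have h4α : (0:ℝ) < 4 ^ α₂ := rpow_pos_of_pos (by norm_num) _
  have hK₁0 : 0 < K₁ := by rw [hK₁]; positivity
  have hK₂0 : 0 < K₂ := by rw [hK₂]; positivity
  have hΦhalf : ∀ r : ℝ, 0 < r → Φ r ≤ (c₂ * 2 ^ α₂) * Φ (r / 2) := by
    intro r hr
    have h := hΦdbl (r/2) r (by linarith) (by linarith)
    have h2 : r / (r / 2) = 2 := by field_simp
    rwa [h2] at h
  have hFcomp : ∀ r : ℝ, 0 < r → K₁ * Φ r ≤ F r ∧ F r ≤ K₂ * Φ r := by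
    intro r hr
    constructor
    · have h1 := hFlb r hr
      have h2 := hΦhalf r hr
      have h3 : K₁ * Φ r ≤ Φ (r / 2) / 2 := by
        rw [hK₁, inv_mul_le_iff₀ (by positivity)]
        calc Φ r ≤ (c₂ * 2 ^ α₂) * Φ (r / 2) := h2
          _ = 2 * (c₂ * 2 ^ α₂) * (Φ (r / 2) / 2) := by ring
      linarith
    · have h1 := hFub r hr
      rw [hK₂]
      calc F r ≤ Φ r / (c₁ * α₁) := h1
        _ = (c₁ * α₁)⁻¹ * Φ r := by rw [div_eq_inv_mul]
  have hFpos : ∀ r : ℝ, 0 < r → 0 < F r := fun r hr =>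
    lt_of_lt_of_le (mul_pos hK₁0 (hΦpos r hr)) (hFcomp r hr).1
  -- the second integrand
  set H : ℝ → ℝ := (Set.Ioi (0:ℝ)).indicator (fun s => F s / s) with hH_def
  have hH_eval : ∀ s : ℝ, 0 < s → H s = F s / s := by
    intro s hs
    rw [hH_def, Set.indicator_of_mem (mem_Ioi.2 hs)]
  have hH_zero : ∀ s : ℝ, s ≤ 0 → H s = 0 := by
    intro s hs
    rw [hH_def, Set.indicator_of_notMem (by simpa using not_lt.2 hs)]
  have hH_nonneg : ∀ s, 0 ≤ H s := by
    intro s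
    rcases le_or_gt s 0 with h | h
    · rw [hH_zero s h]
    · rw [hH_eval s h]; exact div_nonneg (hF_nonneg s) h.le
  have hH_meas : Measurable H :=
    (hFcont.measurable.div measurable_id).indicator measurableSet_Ioi
  have hHle : ∀ s : ℝ, H s ≤ K₂ * g s := by
    intro s
    rcases le_or_gt s 0 with h | h
    · rw [hH_zero s h, hg_zero s h, mul_zero]
    · rw [hH_eval s h, hg_eval s h]
      have h1 := (hFcomp s h).2
      rw [← mul_div_assoc]
      gcongr
  have hHOn : ∀ T : ℝ, 0 < T → IntegrableOn H (Set.Ioc 0 T) volume := by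
    intro T hT
    refine MeasureTheory.Integrable.mono' ((hgOn T hT).const_mul K₂)
      (hH_meas.aestronglyMeasurable.restrict) ?_
    filter_upwards with s
    rw [Real.norm_of_nonneg (hH_nonneg s)]
    exact hHle s
  have hHint : ∀ a b : ℝ, IntervalIntegrable H volume a b := build H hH_zero hHOn
  -- the second primitive
  set G : ℝ → ℝ := fun r => ∫ s in (0:ℝ)..r, H s with hG_def
  have hGcont : Continuous G := intervalIntegral.continuous_primitive hHint 0
  have hGadd : ∀ s t : ℝ, G s + ∫ u in s..t, H u = G t := by
    intro s t
    exact intervalIntegral.integral_add_adjacent_intervals (hHint 0 s) (hHint s t)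
  have hGmono : Monotone G := by
    intro s t hst
    have h1 : 0 ≤ ∫ u in s..t, H u :=
      intervalIntegral.integral_nonneg hst (fun u _ => hH_nonneg u)
    have := hGadd s t
    linarith
  have hG0 : ∀ r : ℝ, r ≤ 0 → G r = 0 := by
    intro r h
    have hz : ∫ s in r..(0:ℝ), H s = 0 := by
      rw [intervalIntegral.integral_congr (g := fun _ => (0:ℝ))
        (fun x hx => hH_zero x (by rw [uIcc_of_le h] at hx; exact hx.2))]
      simp
    rw [hG_def]
    simp only []
    rw [intervalIntegral.integral_symm, hz, neg_zero]
  -- derivative of G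
  have hGderiv : ∀ r : ℝ, 0 < r → HasDerivAt G (F r / r) r := by
    intro r hr
    have hcongr : H =ᶠ[nhds r] fun s => F s / s := by
      filter_upwards [isOpen_Ioi.mem_nhds (mem_Ioi.2 hr)] with s hs
      exact hH_eval s hs
    have hcont : ContinuousAt H r := by
      refine ContinuousAt.congr ?_ hcongr.symm
      exact (hFcont.continuousAt).div continuousAt_id (ne_of_gt hr)
    have := intervalIntegral.integral_hasDerivAt_right (hHint 0 r)
      ⟨Set.univ, Filter.univ_mem, hH_meas.aestronglyMeasurable.restrict⟩ hcont
    rw [hH_eval r hr] at this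
    exact this
  -- upper bound for G
  have hGub : ∀ r : ℝ, 0 < r → G r ≤ K₂ * F r := by
    intro r hr
    have hmono := intervalIntegral.integral_mono_on hr.le (hHint 0 r)
      ((hgint 0 r).const_mul K₂) ?ptw
    case ptw => intro x _; exact hHle x
    rw [intervalIntegral.integral_const_mul] at hmono
    exact hmono
  -- lower bound for G
  have hGlb : ∀ r : ℝ, 0 < r → F (r / 2) / 2 ≤ G r := by
    intro r hr
    have hhalf : (0:ℝ) < r / 2 := by linarith
    have h1 : 0 ≤ G (r / 2) := by
      have := hGmono hhalf.le
      rwa [hG0 0 le_rfl] at this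
    have h2 : (F (r / 2) / r) * (r - r / 2) ≤ ∫ u in (r/2)..r, H u := by
      have hmono := intervalIntegral.integral_mono_on (by linarith : r/2 ≤ r)
        (_root_.intervalIntegrable_const (c := F (r / 2) / r)) (hHint (r/2) r) ?ptw2
      case ptw2 =>
        intro x hx
        have hx0 : 0 < x := lt_of_lt_of_le hhalf hx.1
        rw [hH_eval x hx0]
        exact div_le_div₀ (hF_nonneg x) (hFmono hx.1) hx0 hx.2
      rw [intervalIntegral.integral_const] at hmono
      calc (F (r / 2) / r) * (r - r / 2) = (r - r/2) • (F (r / 2) / r) := by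
            rw [smul_eq_mul]; ring
        _ ≤ _ := hmono
    have h3 := hGadd (r/2) r
    have h4 : (F (r / 2) / r) * (r - r / 2) = F (r / 2) / 2 := by
      field_simp; ring
    linarith
  -- comparability of G with Φ
  set A₁ : ℝ := (4 * (c₂ * 4 ^ α₂))⁻¹ with hA₁
  set A₂ : ℝ := K₂ * K₂ with hA₂
  have hA₁0 : 0 < A₁ := by rw [hA₁]; positivity
  have hA₂0 : 0 < A₂ := mul_pos hK₂0 hK₂0
  have hΦquarter : ∀ r : ℝ, 0 < r → Φ r ≤ (c₂ * 4 ^ α₂) * Φ (r / 4) := by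
    intro r hr
    have h := hΦdbl (r/4) r (by linarith) (by linarith)
    have h2 : r / (r / 4) = 4 := by field_simp
    rwa [h2] at h
  have hGcomp : ∀ r : ℝ, 0 < r → A₁ * Φ r ≤ G r ∧ G r ≤ A₂ * Φ r := by
    intro r hr
    have hhalf : (0:ℝ) < r / 2 := by linarith
    constructor
    · have h1 := hGlb r hr
      have h2 := hFlb (r/2) hhalf
      have h3 : r / 2 / 2 = r / 4 := by ring
      rw [h3] at h2
      have h4 := hΦquarter r hr
      have h5 : A₁ * Φ r ≤ Φ (r / 4) / 4 := by
        rw [hA₁, inv_mul_le_iff₀ (by positivity)]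
        calc Φ r ≤ (c₂ * 4 ^ α₂) * Φ (r / 4) := h4
          _ = 4 * (c₂ * 4 ^ α₂) * (Φ (r / 4) / 4) := by ring
      linarith
    · have h1 := hGub r hr
      have h2 := (hFcomp r hr).2
      calc G r ≤ K₂ * F r := h1
        _ ≤ K₂ * (K₂ * Φ r) := by gcongr
        _ = A₂ * Φ r := by rw [hA₂]; ring
  have hGpos : ∀ r : ℝ, 0 < r → 0 < G r := fun r hr =>
    lt_of_lt_of_le (mul_pos hA₁0 (hΦpos r hr)) (hGcomp r hr).1
  -- strict monotonicity of G on (0,∞)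
  have hGstrict : StrictMonoOn G (Set.Ioi 0) := by
    intro s hs t ht hst
    rw [mem_Ioi] at hs ht
    have h2 : (F s / t) * (t - s) ≤ ∫ u in s..t, H u := by
      have hmono := intervalIntegral.integral_mono_on hst.le
        (_root_.intervalIntegrable_const (c := F s / t)) (hHint s t) ?ptw3
      case ptw3 =>
        intro x hx
        have hx0 : 0 < x := lt_of_lt_of_le hs hx.1
        rw [hH_eval x hx0]
        exact div_le_div₀ (hF_nonneg x) (hFmono hx.1) hx0 hx.2
      rw [intervalIntegral.integral_const] at hmono
      calc (F s / t) * (t - s) = (t - s) • (F s / t) := by rw [smul_eq_mul]; ring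
        _ ≤ _ := hmono
    have h3 := hGadd s t
    have h4 : 0 < (F s / t) * (t - s) :=
      mul_pos (div_pos (hFpos s hs) ht) (by linarith)
    linarith
  -- the extension Ψ and its inverse
  set Ψ : ℝ → ℝ := fun r => G r + min r 0 with hΨ_def
  have hΨeq : ∀ r : ℝ, 0 ≤ r → Ψ r = G r := by
    intro r hr
    rw [hΨ_def]
    simp [min_eq_right hr]
  have hΨneg : ∀ r : ℝ, r ≤ 0 → Ψ r = r := by
    intro r hr
    rw [hΨ_def]
    simp [hG0 r hr, min_eq_left hr]
  have hΨmono : StrictMono Ψ := by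
    intro s t hst
    rcases le_or_gt t 0 with ht | ht
    · rw [hΨneg s (by linarith), hΨneg t ht]; exact hst
    · rcases le_or_gt s 0 with hs | hs
      · rw [hΨneg s hs, hΨeq t ht.le]
        exact lt_of_le_of_lt hs (hGpos t ht)
      · rw [hΨeq s hs.le, hΨeq t ht.le]
        exact hGstrict (mem_Ioi.2 hs) (mem_Ioi.2 ht) hst
  have hΨcont : Continuous Ψ := hGcont.add (continuous_id.min continuous_const)
  have hΨtop : Tendsto Ψ atTop atTop := by
    have hΦ1 : 0 < Φ 1 := hΦpos 1 one_pos
    have h1 : Tendsto (fun r : ℝ => A₁ * (c₁ * Φ 1) * r ^ α₁) atTop atTop := by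
      apply Tendsto.const_mul_atTop (by positivity)
      exact tendsto_rpow_atTop hα₁
    apply tendsto_atTop_mono' atTop ?_ h1
    filter_upwards [eventually_ge_atTop (1:ℝ)] with r hr
    have hr0 : (0:ℝ) < r := lt_of_lt_of_le one_pos hr
    have h2 : c₁ * r ^ α₁ * Φ 1 ≤ Φ r := hΦgrow r hr
    have h4 := (hGcomp r hr0).1
    rw [hΨeq r hr0.le]
    calc A₁ * (c₁ * Φ 1) * r ^ α₁ = A₁ * (c₁ * r ^ α₁ * Φ 1) := by ring
      _ ≤ A₁ * Φ r := by gcongr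
      _ ≤ G r := h4
  have hΨbot : Tendsto Ψ atBot atBot := by
    have : Ψ =ᶠ[atBot] id := by
      filter_upwards [eventually_le_atBot (0:ℝ)] with r hr
      rw [hΨneg r hr]; rfl
    exact Filter.Tendsto.congr' this.symm tendsto_id
  have hΨsurj : Function.Surjective Ψ := hΨcont.surjective hΨtop hΨbot
  set e : ℝ ≃o ℝ := StrictMono.orderIsoOfSurjective Ψ hΨmono hΨsurj with he_def
  have he_app : ∀ r : ℝ, e r = Ψ r := by
    intro r
    rw [he_def, StrictMono.coe_orderIsoOfSurjective]
  set Ginv : ℝ → ℝ := fun t => e.symm t with hGinv_def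
  have hGinvcont : Continuous Ginv := by
    rw [hGinv_def]
    exact (OrderIso.continuous e.symm)
  have hinv1 : ∀ r : ℝ, Ginv (Ψ r) = r := by
    intro r
    rw [hGinv_def]
    simp only []
    rw [← he_app r]
    exact e.symm_apply_apply r
  have hinv2 : ∀ t : ℝ, Ψ (Ginv t) = t := by
    intro t
    rw [hGinv_def]
    simp only []
    rw [← he_app]
    exact e.apply_symm_apply t
  have hleft : ∀ r : ℝ, 0 < r → Ginv (G r) = r := by
    intro r hr
    rw [← hΨeq r hr.le]
    exact hinv1 r
  have hright : ∀ t : ℝ, 0 < t → 0 < Ginv t ∧ G (Ginv t) = t := by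
    intro t ht
    have h1 : Ψ (Ginv t) = t := hinv2 t
    have h2 : 0 < Ginv t := by
      by_contra hcon
      push_neg at hcon
      rw [hΨneg _ hcon] at h1
      linarith
    refine ⟨h2, ?_⟩
    rw [← hΨeq _ h2.le]
    exact h1
  -- derivative of the inverse
  have hGinvderiv : ∀ t : ℝ, 0 < t → HasDerivAt Ginv (Ginv t / F (Ginv t)) t := by
    intro t ht
    obtain ⟨hr, heq⟩ := hright t ht
    have hder := hGderiv (Ginv t) hr
    have hne : F (Ginv t) / Ginv t ≠ 0 := ne_of_gt (div_pos (hFpos _ hr) hr)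
    have hfg : ∀ᶠ y in nhds t, G (Ginv y) = y := by
      filter_upwards [isOpen_Ioi.mem_nhds (mem_Ioi.2 ht)] with y hy
      exact (hright y hy).2
    have := HasDerivAt.of_local_left_inverse hGinvcont.continuousAt hder hne hfg
    rwa [inv_div] at this
  -- assemble
  refine ⟨G, Ginv, hGstrict, ?_, ?_, ?_, hleft, hright, ?_, ?_⟩
  · exact fun r hr => (hGderiv r hr).differentiableAt
  · -- comparability with Φ
    refine ⟨A₂⁻¹, A₁⁻¹, by positivity, by positivity, ?_⟩
    intro r hr
    obtain ⟨h1, h2⟩ := hGcomp r hr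
    constructor
    · calc A₂⁻¹ * G r ≤ A₂⁻¹ * (A₂ * Φ r) := by gcongr
        _ = Φ r := by field_simp; try ring
    · calc Φ r = A₁⁻¹ * (A₁ * Φ r) := by field_simp; try ring
        _ ≤ A₁⁻¹ * G r := by gcongr
  · -- weak scaling
    refine ⟨A₁ / A₂ * c₁, A₂ / A₁ * c₂, by positivity, by positivity, ?_⟩
    intro r R hr hrR
    have hR : 0 < R := lt_of_lt_of_le hr hrR
    obtain ⟨hr1, hr2⟩ := hGcomp r hr
    obtain ⟨hR1, hR2⟩ := hGcomp R hR
    have hΦr := hΦpos r hr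
    have hΦR := hΦpos R hR
    have hGr := hGpos r hr
    obtain ⟨hs1, hs2⟩ := hscale r R hr hrR
    constructor
    · calc A₁ / A₂ * c₁ * (R / r) ^ α₁ = A₁ / A₂ * (c₁ * (R / r) ^ α₁) := by ring
        _ ≤ A₁ / A₂ * (Φ R / Φ r) := by gcongr
        _ = (A₁ * Φ R) / (A₂ * Φ r) := by field_simp; try ring
        _ ≤ G R / G r := div_le_div₀ (hGpos R hR).le hR1 hGr hr2
    · calc G R / G r ≤ (A₂ * Φ R) / (A₁ * Φ r) :=
            div_le_div₀ (by positivity) hR2 (mul_pos hA₁0 hΦr) hr1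
        _ = A₂ / A₁ * (Φ R / Φ r) := by field_simp; try ring
        _ ≤ A₂ / A₁ * (c₂ * (R / r) ^ α₂) := by gcongr
        _ = A₂ / A₁ * c₂ * (R / r) ^ α₂ := by ring
  · -- derivative comparability for G
    refine ⟨K₁ / A₂, K₂ / A₁, by positivity, by positivity, ?_⟩
    intro r hr
    have hd : deriv G r = F r / r := (hGderiv r hr).deriv
    obtain ⟨hg1, hg2⟩ := hGcomp r hr
    obtain ⟨hf1, hf2⟩ := hFcomp r hr
    rw [hd]
    constructor
    · have h1 : K₁ / A₂ * G r ≤ F r := by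
        calc K₁ / A₂ * G r ≤ K₁ / A₂ * (A₂ * Φ r) := by gcongr
          _ = K₁ * Φ r := by field_simp; try ring
          _ ≤ F r := hf1
      calc K₁ / A₂ * (G r / r) = (K₁ / A₂ * G r) / r := by ring
        _ ≤ F r / r := by gcongr
    · have h1 : F r ≤ K₂ / A₁ * G r := by
        calc F r ≤ K₂ * Φ r := hf2
          _ = K₂ / A₁ * (A₁ * Φ r) := by field_simp; try ring
          _ ≤ K₂ / A₁ * G r := by gcongr
      calc F r / r ≤ (K₂ / A₁ * G r) / r := by gcongr
        _ = K₂ / A₁ * (G r / r) := by ring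
  · -- derivative comparability for the inverse
    refine ⟨A₁ / K₂, A₂ / K₁, by positivity, by positivity, ?_⟩
    intro t ht
    obtain ⟨hrpos, heq⟩ := hright t ht
    set r : ℝ := Ginv t with hr_def
    have hd : deriv Ginv t = r / F r := (hGinvderiv t ht).deriv
    obtain ⟨hg1, hg2⟩ := hGcomp r hrpos
    obtain ⟨hf1, hf2⟩ := hFcomp r hrpos
    have hFr : 0 < F r := hFpos r hrpos
    have hGr : 0 < G r := hGpos r hrpos
    rw [hd, ← heq]
    constructor
    · have h1 : F r ≤ K₂ / A₁ * G r := by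
        calc F r ≤ K₂ * Φ r := hf2
          _ = K₂ / A₁ * (A₁ * Φ r) := by field_simp; try ring
          _ ≤ K₂ / A₁ * G r := by gcongr
      calc A₁ / K₂ * (r / G r) = r / (K₂ / A₁ * G r) :=
            aux_div_swap _ _ _ _ (ne_of_gt hA₁0) (ne_of_gt hK₂0) (ne_of_gt hGr)
        _ ≤ r / F r := by
            apply div_le_div_of_nonneg_left hrpos.le hFr h1
    · have h1 : K₁ / A₂ * G r ≤ F r := by
        calc K₁ / A₂ * G r ≤ K₁ / A₂ * (A₂ * Φ r) := by gcongr
          _ = K₁ * Φ r := by field_simp; try ring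
          _ ≤ F r := hf1
      calc r / F r ≤ r / (K₁ / A₂ * G r) := by
            apply div_le_div_of_nonneg_left hrpos.le (by positivity) h1
        _ = A₂ / K₁ * (r / G r) :=
            (aux_div_swap _ _ _ _ (ne_of_gt hA₂0) (ne_of_gt hK₁0) (ne_of_gt hGr)).symm
end

section
/- Let Φ:[0,∞)→[0,∞) be strictly increasing with Φ(0)=0 and satisfy the global weak scaling condition with indices 0<α₁≤α₂ (i.e. c(R/r)^{α₁} ≤ Φ(R)/Φ(r) ≤ c′(R/r)^{α₂} for all 0<r≤R). Let f:(0,∞)→(0,∞) and assume there exist constants c₁,p>0 such that s^p f(s) ≤ c₁ t^p f(t) for all 0<s≤t. Then there exists a constant C=C(c₁,p) (also depending on the scaling constants of Φ) such that for all r,κ>0, ∫_0^r f(s) exp(−κ²/Φ^{−1}(s)²) ds ≤ C r^{p+1} f(r) / Φ(κ)^p, where Φ^{−1} is the inverse of Φ. -/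
open MeasureTheory Real Set

lemma rpow_le_const_mul_exp (z m : ℝ) (hz : 0 ≤ z) (hm : 0 ≤ m) (n : ℕ) (hmn : m ≤ n) :
    z ^ m ≤ (1 + (n.factorial : ℝ)) * Real.exp z := by
  have hfac : (0:ℝ) < (n.factorial : ℝ) := by exact_mod_cast n.factorial_pos
  rcases le_or_gt z 1 with h | h
  · have h1 : z ^ m ≤ 1 := Real.rpow_le_one hz h hm
    have h2 : (1:ℝ) ≤ Real.exp z := by
      have := Real.add_one_le_exp z; linarith
    nlinarith [mul_pos hfac (Real.exp_pos z)]
  · have h1 : z ^ m ≤ z ^ (n : ℝ) := Real.rpow_le_rpow_of_exponent_le h.le hmn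
    rw [Real.rpow_natCast] at h1
    have h2 : z ^ n / (n.factorial : ℝ) ≤ Real.exp z :=
      Real.pow_div_factorial_le_exp z (by linarith) n
    rw [div_le_iff₀ hfac] at h2
    nlinarith [Real.exp_pos z]

set_option maxHeartbeats 1000000 in
/-- Lemma 3.2: if `Φ` is strictly increasing with `Φ(0)=0` and globally weakly scaling
with indices `α₁ ≤ α₂`, and `f : (0,∞) → (0,∞)` satisfies `s^p f(s) ≤ c₁ t^p f(t)` for
`0 < s ≤ t`, then `∫_0^r f(s) exp(-κ²/Φ⁻¹(s)²) ds ≤ C r^{p+1} f(r)/Φ(κ)^p`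
for all `r, κ > 0`. -/
theorem leftint_Phi_bound
    (Φ ΦInv : ℝ → ℝ) (α₁ α₂ cs cs' : ℝ)
    (hα₁ : 0 < α₁) (hα : α₁ ≤ α₂) (hcs : 0 < cs) (hcs' : 0 < cs')
    (hΦ0 : Φ 0 = 0) (hΦmono : StrictMonoOn Φ (Set.Ici 0))
    (hscale : ∀ r R : ℝ, 0 < r → r ≤ R →
      cs * (R / r) ^ α₁ ≤ Φ R / Φ r ∧ Φ R / Φ r ≤ cs' * (R / r) ^ α₂)
    (hΦInv : ∀ s : ℝ, 0 < s → 0 < ΦInv s ∧ Φ (ΦInv s) = s)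
    (f : ℝ → ℝ) (hf_meas : Measurable f) (hf_pos : ∀ s : ℝ, 0 < s → 0 < f s)
    (c₁ p : ℝ) (hc₁ : 0 < c₁) (hp : 0 < p)
    (hf : ∀ s t : ℝ, 0 < s → s ≤ t → s ^ p * f s ≤ c₁ * (t ^ p * f t)) :
    ∃ C : ℝ, 0 < C ∧ ∀ r κ : ℝ, 0 < r → 0 < κ →
      (∫ s in Set.Ioc (0:ℝ) r, f s * Real.exp (-(κ ^ 2 / (ΦInv s) ^ 2))) ≤
        C * (r ^ (p + 1) * f r / Φ κ ^ p) := by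
  have hα₂ : 0 < α₂ := lt_of_lt_of_le hα₁ hα
  set n : ℕ := Nat.ceil (p * α₂ / 2) with hn
  set A : ℝ := max 1 ((1 + (n.factorial : ℝ)) * cs' ^ p) with hA
  have hA1 : (1:ℝ) ≤ A := le_max_left _ _
  have hApos : 0 < A := lt_of_lt_of_le one_pos hA1
  refine ⟨A * c₁, mul_pos hApos hc₁, ?_⟩
  intro r κ hr hκ
  have hΦκ : 0 < Φ κ := by
    have := hΦmono (le_refl (0:ℝ)) (le_of_lt hκ) hκ
    rwa [hΦ0] at this
  have hfr : 0 < f r := hf_pos r hr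
  have hΦκp : 0 < Φ κ ^ p := Real.rpow_pos_of_pos hΦκ p
  have hrp : 0 < r ^ p := Real.rpow_pos_of_pos hr p
  set M : ℝ := A * c₁ * (r ^ p * f r) / Φ κ ^ p with hM
  have hMpos : 0 < M :=
    div_pos (mul_pos (mul_pos hApos hc₁) (mul_pos hrp hfr)) hΦκp
  -- pointwise bound
  have key : ∀ s ∈ Set.Ioc (0:ℝ) r,
      f s * Real.exp (-(κ ^ 2 / (ΦInv s) ^ 2)) ≤ M := by
    intro s hs
    obtain ⟨hs0, hsr⟩ := hs
    obtain ⟨hu, hΦu⟩ := hΦInv s hs0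
    set u := ΦInv s with hudef
    have hfs : 0 < f s := hf_pos s hs0
    have hsΦκ : 0 < s / Φ κ := div_pos hs0 hΦκ
    have hsΦκp : 0 < (s / Φ κ) ^ p := Real.rpow_pos_of_pos hsΦκ p
    -- step 1: exp(-(κ²/u²)) ≤ A * (s/Φκ)^p
    have hstep : Real.exp (-(κ ^ 2 / u ^ 2)) ≤ A * (s / Φ κ) ^ p := by
      rcases le_or_gt κ u with hle | hlt
      · -- then Φ κ ≤ s, so (s/Φκ)^p ≥ 1
        have hΦκs : Φ κ ≤ s := by
          rcases eq_or_lt_of_le hle with h | h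
          · rw [h, hΦu]
          · exact le_of_lt (hΦu ▸ hΦmono (le_of_lt hκ) (le_of_lt hu) h)
        have h1 : (1:ℝ) ≤ (s / Φ κ) ^ p :=
          Real.one_le_rpow ((one_le_div hΦκ).2 hΦκs) (le_of_lt hp)
        have h2 : Real.exp (-(κ ^ 2 / u ^ 2)) ≤ 1 :=
          Real.exp_le_one_iff.2 (neg_nonpos.2 (by positivity))
        nlinarith
      · -- u < κ : use scaling
        have hscal := (hscale u κ hu (le_of_lt hlt)).2
        rw [hΦu] at hscal
        have hκu : 0 < κ / u := div_pos hκ hu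
        have huκ : 0 < u / κ := div_pos hu hκ
        have hκuα : 0 < (κ / u) ^ α₂ := Real.rpow_pos_of_pos hκu α₂
        -- (u/κ)^α₂ ≤ cs' * s / Φ κ
        have h3 : (u / κ) ^ α₂ ≤ cs' * s / Φ κ := by
          have hinv : (u / κ) ^ α₂ = ((κ / u) ^ α₂)⁻¹ := by
            rw [← Real.inv_rpow (le_of_lt hκu), inv_div]
          rw [div_le_iff₀ hs0] at hscal
          rw [hinv, inv_eq_one_div, div_le_div_iff₀ hκuα hΦκ]
          nlinarith
        -- the exponential estimate
        set z : ℝ := κ ^ 2 / u ^ 2 with hzdef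
        have hz : (0:ℝ) < z := by positivity
        have hzpow := rpow_le_const_mul_exp z (p * α₂ / 2)
          (le_of_lt hz) (by positivity) n (Nat.le_ceil _)
        have hzm : z ^ (p * α₂ / 2) = (κ / u) ^ (p * α₂) := by
          rw [show z = (κ / u) ^ (2:ℕ) by rw [div_pow],
            ← Real.rpow_natCast (κ / u) 2, ← Real.rpow_mul (le_of_lt hκu)]
          congr 1
          push_cast
          ring
        have hw : (κ / u) ^ (p * α₂) = ((u / κ) ^ (p * α₂))⁻¹ := by
          rw [← Real.inv_rpow (le_of_lt huκ), inv_div]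
        set w : ℝ := (u / κ) ^ (p * α₂) with hwdef
        have hwpos : 0 < w := Real.rpow_pos_of_pos huκ _
        have hE : 0 < Real.exp z := Real.exp_pos z
        have hF : (0:ℝ) < 1 + (n.factorial : ℝ) := by positivity
        have h6 : 1 ≤ (1 + (n.factorial : ℝ)) * Real.exp z * w := by
          rw [hzm, hw] at hzpow
          calc (1:ℝ) = w⁻¹ * w := (inv_mul_cancel₀ (ne_of_gt hwpos)).symm
            _ ≤ (1 + (n.factorial : ℝ)) * Real.exp z * w :=
              mul_le_mul_of_nonneg_right hzpow (le_of_lt hwpos)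
        have hexp : Real.exp (-z) ≤ (1 + (n.factorial : ℝ)) * w := by
          rw [Real.exp_neg, inv_eq_one_div, div_le_iff₀ hE]
          calc (1:ℝ) ≤ (1 + (n.factorial : ℝ)) * Real.exp z * w := h6
            _ = (1 + (n.factorial : ℝ)) * w * Real.exp z := by ring
        -- w = ((u/κ)^α₂)^p ≤ (cs' * (s/Φκ))^p = cs'^p * (s/Φκ)^p
        have hw2 : w = ((u / κ) ^ α₂) ^ p := by
          rw [hwdef, ← Real.rpow_mul (le_of_lt huκ), mul_comm α₂ p]
        have h7 : w ≤ cs' ^ p * (s / Φ κ) ^ p := by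
          rw [hw2, ← Real.mul_rpow (le_of_lt hcs') (le_of_lt hsΦκ)]
          apply Real.rpow_le_rpow (Real.rpow_pos_of_pos huκ α₂).le _ (le_of_lt hp)
          rw [← mul_div_assoc]; exact h3
        have h8 : (1 + (n.factorial : ℝ)) * cs' ^ p ≤ A := le_max_right _ _
        calc Real.exp (-z) ≤ (1 + (n.factorial : ℝ)) * w := hexp
          _ ≤ (1 + (n.factorial : ℝ)) * (cs' ^ p * (s / Φ κ) ^ p) :=
              mul_le_mul_of_nonneg_left h7 (le_of_lt hF)
          _ = (1 + (n.factorial : ℝ)) * cs' ^ p * (s / Φ κ) ^ p := by ring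
          _ ≤ A * (s / Φ κ) ^ p := mul_le_mul_of_nonneg_right h8 (le_of_lt hsΦκp)
    -- combine with the doubling property of f
    have hdiv : (s / Φ κ) ^ p = s ^ p / Φ κ ^ p :=
      Real.div_rpow (le_of_lt hs0) (le_of_lt hΦκ) p
    have hff := hf s r hs0 hsr
    calc f s * Real.exp (-(κ ^ 2 / u ^ 2)) ≤ f s * (A * (s / Φ κ) ^ p) :=
          mul_le_mul_of_nonneg_left hstep (le_of_lt hfs)
      _ = A * (s ^ p * f s) / Φ κ ^ p := by rw [hdiv]; ring
      _ ≤ A * (c₁ * (r ^ p * f r)) / Φ κ ^ p := by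
          gcongr
      _ = M := by rw [hM]; ring
  -- integrate the constant bound
  have hfin : volume (Set.Ioc (0:ℝ) r) < ⊤ := by
    rw [Real.volume_Ioc]; exact ENNReal.ofReal_lt_top
  have hnorm : ‖∫ s in Set.Ioc (0:ℝ) r, f s * Real.exp (-(κ ^ 2 / (ΦInv s) ^ 2))‖ ≤
      M * (volume (Set.Ioc (0:ℝ) r)).toReal := by
    apply norm_setIntegral_le_of_norm_le_const_ae' hfin
    filter_upwards with s hs
    rw [Real.norm_eq_abs, abs_of_nonneg
      (mul_nonneg (hf_pos s hs.1).le (Real.exp_pos _).le)]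
    exact key s hs
  have hvol : (volume (Set.Ioc (0:ℝ) r)).toReal = r := by
    rw [Real.volume_Ioc, ENNReal.toReal_ofReal (by linarith)]; ring
  have hfinal : (∫ s in Set.Ioc (0:ℝ) r, f s * Real.exp (-(κ ^ 2 / (ΦInv s) ^ 2))) ≤ M * r := by
    calc (∫ s in Set.Ioc (0:ℝ) r, f s * Real.exp (-(κ ^ 2 / (ΦInv s) ^ 2)))
        ≤ ‖∫ s in Set.Ioc (0:ℝ) r, f s * Real.exp (-(κ ^ 2 / (ΦInv s) ^ 2))‖ :=
          le_abs_self _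
      _ ≤ M * (volume (Set.Ioc (0:ℝ) r)).toReal := hnorm
      _ = M * r := by rw [hvol]
  have hrpow : r ^ (p + 1) = r ^ p * r := by
    rw [Real.rpow_add hr, Real.rpow_one]
  calc (∫ s in Set.Ioc (0:ℝ) r, f s * Real.exp (-(κ ^ 2 / (ΦInv s) ^ 2))) ≤ M * r := hfinal
    _ = A * c₁ * (r ^ (p + 1) * f r / Φ κ ^ p) := by rw [hM, hrpow]; ring
end

section
/- Suppose (Poly-R₁) and HK^h_B hold. Then for every T>0 there exists a constant C≥1 such that C^{−1} e^{−tφ(λ_D)} h(1,x,y) ≤ q(t,x,y) ≤ C e^{−tφ(λ_D)} h(1,x,y) for all (t,x,y)∈[T,∞)×D×D, where λ_D>0 is the constant in the large-time estimate of HK^h_B. -/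
open MeasureTheory Real Set
open scoped ENNReal

/-- Tail of the Lévy measure: `w(r) = ν((r,∞))`. -/
noncomputable def levyTail (ν : Measure ℝ) (r : ℝ) : ℝ := (ν (Set.Ioi r)).toReal

/-- Laplace exponent `φ(λ) = ∫ (1 - e^{-λ s}) ν(ds)`. -/
noncomputable def laplaceExp (ν : Measure ℝ) (lam : ℝ) : ℝ :=
  ∫ s, (1 - Real.exp (-(lam * s))) ∂ν

/-- Condition (Poly-R₁); (Poly-∞) is the case `R₁ = ⊤`. -/
def PolyCond (ν : Measure ℝ) (R₁ : ℝ≥0∞) (c c' β₁ β₂ : ℝ) : Prop :=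
  ∀ r R : ℝ, 0 < r → r ≤ R → ENNReal.ofReal R < R₁ →
    c * (R / r) ^ β₁ ≤ levyTail ν r / levyTail ν R ∧
      levyTail ν r / levyTail ν R ≤ c' * (R / r) ^ β₂

/-- `ν` is the Lévy measure of a driftless subordinator. -/
structure IsLevyMeasure (ν : Measure ℝ) : Prop where
  supp : ν (Set.Iic 0) = 0
  tail_fin : ∀ r : ℝ, 0 < r → ν (Set.Ioi r) < ⊤
  integ : IntegrableOn (fun s => s) (Set.Ioc (0:ℝ) 1) ν

/-- `μ t` is the law of `S_t` for the driftless subordinator with Lévy measure `ν`. -/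
structure IsSubordinatorLaw (ν : Measure ℝ) (μ : ℝ → Measure ℝ) : Prop where
  levy : IsLevyMeasure ν
  prob : ∀ t : ℝ, 0 < t → IsProbabilityMeasure (μ t)
  nonneg : ∀ t : ℝ, 0 < t → μ t (Set.Iio 0) = 0
  laplace : ∀ t lam : ℝ, 0 < t → 0 ≤ lam →
    (∫ s, Real.exp (-(lam * s)) ∂(μ t)) = Real.exp (-(t * laplaceExp ν lam))

/-- `H(λ) = φ(λ) - λ φ'(λ)`. -/
noncomputable def Hfun (ν : Measure ℝ) (lam : ℝ) : ℝ :=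
  laplaceExp ν lam - lam * deriv (laplaceExp ν) lam

/-- `σ(t,s) = (φ')⁻¹(s/t)` if `s/t < φ'(0+)`, and `σ(t,s) = 0` otherwise. -/
def IsSigmaFun (ν : Measure ℝ) (σ : ℝ → ℝ → ℝ) : Prop :=
  ∀ t s : ℝ, 0 < t → 0 < s →
    ((∃ lam : ℝ, 0 < lam ∧ s / t < deriv (laplaceExp ν) lam) →
      0 < σ t s ∧ deriv (laplaceExp ν) (σ t s) = s / t) ∧
    ((∀ lam : ℝ, 0 < lam → deriv (laplaceExp ν) lam ≤ s / t) → σ t s = 0)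

/-- `φInv` is the inverse of the Laplace exponent `φ` on `(0,∞)`. -/
def IsPhiInv (ν : Measure ℝ) (φInv : ℝ → ℝ) : Prop :=
  ∀ u : ℝ, 0 < u → 0 < φInv u ∧ laplaceExp ν (φInv u) = u

/-- `HInv` is the inverse of `H` on `(0,∞)`. -/
def IsHInv (ν : Measure ℝ) (HInv : ℝ → ℝ) : Prop :=
  ∀ u : ℝ, 0 < u → 0 < HInv u ∧ Hfun ν (HInv u) = u

open Metric

/-- `V(x,r) = m(B(x,r))`. -/
noncomputable def vol {E : Type*} [PseudoMetricSpace E] [MeasurableSpace E] (m : Measure E) (x : E) (r : ℝ) : ℝ :=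
  (m (Metric.ball x r)).toReal

/-- Volume doubling and reverse doubling with exponents `d₁ ≤ d₂` and
localization radius `R_E`. -/
def VolDoubling {E : Type*} [PseudoMetricSpace E] [MeasurableSpace E] (m : Measure E) (R_E : ℝ≥0∞)
    (d₁ d₂ : ℝ) : Prop :=
  ∀ a : ℝ, 1 ≤ a → ∃ CV : ℝ, 1 ≤ CV ∧ ∀ (x : E) (r R : ℝ), 0 < r → r ≤ R →
    ENNReal.ofReal R < ENNReal.ofReal a * R_E →
    CV⁻¹ * (R / r) ^ d₁ ≤ vol m x R / vol m x r ∧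
      vol m x R / vol m x r ≤ CV * (R / r) ^ d₂

/-- Global weak scaling condition with indices `α₁ ≤ α₂`. -/
def WeakScaling (Φ : ℝ → ℝ) (c c' α₁ α₂ : ℝ) : Prop :=
  ∀ r R : ℝ, 0 < r → r ≤ R →
    c * (R / r) ^ α₁ ≤ Φ R / Φ r ∧ Φ R / Φ r ≤ c' * (R / r) ^ α₂

/-- `h` is a boundary function on `D`: it takes values in `[0,1]`, satisfies (H1)
(non-increasing in time) and (H2) with constant `cH` and exponent `γ` below the
time horizon `T` (`T = ⊤` for unbounded `D`). -/
def IsBoundaryFunction {E : Type*} (D : Set E) (h : ℝ → E → E → ℝ) (T : ℝ≥0∞)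
    (cH γ : ℝ) : Prop :=
  (∀ (t : ℝ) (x y : E), 0 < t → x ∈ D → y ∈ D → h t x y ∈ Set.Icc (0:ℝ) 1) ∧
  (∀ (x y : E), x ∈ D → y ∈ D → ∀ s t : ℝ, 0 < s → s ≤ t → h t x y ≤ h s x y) ∧
  (∀ (x y : E), x ∈ D → y ∈ D → ∀ s t : ℝ, 0 < s → s ≤ t → ENNReal.ofReal t < T →
    s ^ γ * h s x y ≤ cH * (t ^ γ * h t x y))

/-- Two-sided estimate (3.4) for the heat kernel `p_D` of `Y^D`, holding for all times
`t` with `0 < t` satisfying `tcond t`. -/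
def HKest {E : Type*} [PseudoMetricSpace E] [MeasurableSpace E] (m : Measure E) (D : Set E)
    (Ψ ΦInv : ℝ → ℝ) (h pD : ℝ → E → E → ℝ)
    (C₀ cl cexl cu cexu : ℝ) (tcond : ℝ → Prop) : Prop :=
  ∀ (t : ℝ) (x y : E), 0 < t → tcond t → x ∈ D → y ∈ D →
    cl * h t x y * min ((vol m x (ΦInv t))⁻¹)
        (C₀ * t / (vol m x (dist x y) * Ψ (dist x y)) +
          (vol m x (ΦInv t))⁻¹ * Real.exp (-(cexl * dist x y ^ 2 / ΦInv t ^ 2)))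
      ≤ pD t x y ∧
    pD t x y ≤ cu * h t x y * min ((vol m x (ΦInv t))⁻¹)
        (C₀ * t / (vol m x (dist x y) * Ψ (dist x y)) +
          (vol m x (ΦInv t))⁻¹ * Real.exp (-(cexu * dist x y ^ 2 / ΦInv t ^ 2)))

/-- Large-time estimate (3.5): `p_D(t,x,y) ≍ e^{-λ_D t} h(1,x,y)` for `t ≥ 1`. -/
def HKlarge {E : Type*} (D : Set E) (h pD : ℝ → E → E → ℝ) (lamD c₅ c₆ : ℝ) : Prop :=
  ∀ (t : ℝ) (x y : E), 1 ≤ t → x ∈ D → y ∈ D →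
    c₅ * Real.exp (-(lamD * t)) * h 1 x y ≤ pD t x y ∧
      pD t x y ≤ c₆ * Real.exp (-(lamD * t)) * h 1 x y

/-- Heat kernel `q(t,x,y) = ∫ p_D(s,x,y) P(S_t ∈ ds)` of the subordinate process. -/
noncomputable def subq {E : Type*} (μ : ℝ → Measure ℝ) (pD : ℝ → E → E → ℝ)
    (t : ℝ) (x y : E) : ℝ :=
  ∫ s, pD s x y ∂(μ t)

/-- Jump kernel `J(x,y) = ∫ p_D(s,x,y) ν(ds)` of the subordinate process. -/
noncomputable def subJ {E : Type*} (ν : Measure ℝ) (pD : ℝ → E → E → ℝ) (x y : E) : ℝ :=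
  ∫ s, pD s x y ∂ν

/-- Green function `G_D(x,y) = ∫_0^∞ q(t,x,y) dt` of the subordinate process. -/
noncomputable def subG {E : Type*} (μ : ℝ → Measure ℝ) (pD : ℝ → E → E → ℝ)
    (x y : E) : ℝ :=
  ∫ t in Set.Ioi (0:ℝ), subq μ pD t x y

/-- `ψ(r) = 1/φ(1/Φ(r))`. -/
noncomputable def psiFun (ν : Measure ℝ) (Φ : ℝ → ℝ) (r : ℝ) : ℝ :=
  (laplaceExp ν ((Φ r)⁻¹))⁻¹

/-- `𝔅_h(t,x,y) = ∫_{2/φ⁻¹(1/t)}^{4Φ(ρ(x,y))} h(s,x,y) w(s) ds`. -/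
noncomputable def sB {E : Type*} [PseudoMetricSpace E] [MeasurableSpace E] (ν : Measure ℝ)
    (h : ℝ → E → E → ℝ) (Φ φInv : ℝ → ℝ) (t : ℝ) (x y : E) : ℝ :=
  ∫ s in Set.Ioc (2 * (φInv (t⁻¹))⁻¹) (4 * Φ (dist x y)), h s x y * levyTail ν s

/-- Hypotheses of case (1): (Poly-R₁) holds and `HK^h_B` holds. -/
def BddCaseHyp {E : Type*} [PseudoMetricSpace E] [MeasurableSpace E] (m : Measure E) (D : Set E)
    (Φ Ψ ΦInv : ℝ → ℝ) (h pD : ℝ → E → E → ℝ) (ν : Measure ℝ)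
    (R₁ : ℝ≥0∞) (cw cw' β₁ β₂ cH γ C₀ cl cexl cu cexu : ℝ) : Prop :=
  PolyCond ν R₁ cw cw' β₁ β₂ ∧
  Bornology.IsBounded D ∧
  ENNReal.ofReal (8 * Φ (Metric.diam D)) < R₁ ∧
  IsBoundaryFunction D h (ENNReal.ofReal (4 * Φ (Metric.diam D) + 1)) cH γ ∧
  HKest m D Ψ ΦInv h pD C₀ cl cexl cu cexu (fun t => t ≤ 1) ∧
  ∃ lamD c₅ c₆ : ℝ, 0 < lamD ∧ 0 < c₅ ∧ 0 < c₆ ∧ HKlarge D h pD lamD c₅ c₆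

/-- Hypotheses of case (2): (Poly-∞) holds and `HK^h_U` holds (with `R_E = ⊤`). -/
def UnbddCaseHyp {E : Type*} [PseudoMetricSpace E] [MeasurableSpace E] (m : Measure E) (D : Set E)
    (Ψ ΦInv : ℝ → ℝ) (h pD : ℝ → E → E → ℝ) (ν : Measure ℝ)
    (R_E : ℝ≥0∞) (cw cw' β₁ β₂ cH γ C₀ cl cexl cu cexu : ℝ) : Prop :=
  PolyCond ν ⊤ cw cw' β₁ β₂ ∧
  R_E = ⊤ ∧
  IsBoundaryFunction D h ⊤ cH γ ∧
  HKest m D Ψ ΦInv h pD C₀ cl cexl cu cexu (fun _ => True)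

/-- On-diagonal expression `h(1/φ⁻¹(1/t),x,y) / V(x, ψ⁻¹(t))`. -/
noncomputable def onDiag {E : Type*} [PseudoMetricSpace E] [MeasurableSpace E] (m : Measure E)
    (h : ℝ → E → E → ℝ) (ΦInv φInv : ℝ → ℝ) (t : ℝ) (x y : E) : ℝ :=
  h ((φInv (t⁻¹))⁻¹) x y / vol m x (ΦInv ((φInv (t⁻¹))⁻¹))

/-- Off-diagonal expression in Theorem 4.2(ii), with constant `c` in the exponential. -/
noncomputable def offDiag {E : Type*} [PseudoMetricSpace E] [MeasurableSpace E] (ν : Measure ℝ)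
    (m : Measure E) (h : ℝ → E → E → ℝ) (Φ Ψ ΦInv φInv : ℝ → ℝ)
    (C₀ c t : ℝ) (x y : E) : ℝ :=
  C₀ / (vol m x (dist x y) * Ψ (dist x y)) *
      (t * sB ν h Φ φInv t x y + h ((φInv (t⁻¹))⁻¹) x y / φInv (t⁻¹)) +
    h ((φInv (t⁻¹))⁻¹) x y / vol m x (ΦInv ((φInv (t⁻¹))⁻¹)) *
      Real.exp (-(c * dist x y ^ 2 / ΦInv ((φInv (t⁻¹))⁻¹) ^ 2)) +
    h (Φ (dist x y)) x y * (t * levyTail ν (Φ (dist x y))) / vol m x (dist x y)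


section Helpers
open Filter

private lemma cover_Ioc : Ioc (0:ℝ) 1 ⊆ ⋃ n : ℕ, Ioc ((1/2:ℝ)^(n+1)) ((1/2:ℝ)^n) := by
  intro x hx
  have hex : ∃ n : ℕ, (1/2:ℝ)^(n+1) < x := by
    obtain ⟨n, hn⟩ := exists_pow_lt_of_lt_one hx.1 (by norm_num : (1/2:ℝ) < 1)
    exact ⟨n, lt_of_le_of_lt (pow_le_pow_of_le_one (by norm_num) (by norm_num) (Nat.le_succ n)) hn⟩
  classical
  refine mem_iUnion.mpr ⟨Nat.find hex, Nat.find_spec hex, ?_⟩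
  rcases hn : Nat.find hex with _ | k
  · simpa using hx.2
  · have h2 := Nat.find_min hex (by omega : k < Nat.find hex)
    push_neg at h2
    simpa using h2

private lemma summable_aux {r c q : ℝ} (hc : 0 < c) (hq : 1 < q) (hr : 0 < r) :
    Summable (fun n : ℕ => r ^ n * Real.exp (-(c * q ^ n))) := by
  apply summable_of_ratio_norm_eventually_le (r := 1/2) (by norm_num)
  have h2 : Filter.Tendsto (fun n : ℕ => (c * (q-1)) * q ^ n) Filter.atTop Filter.atTop :=
    Filter.Tendsto.const_mul_atTop (by nlinarith) (tendsto_pow_atTop_atTop_of_one_lt hq)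
  have h3 : Filter.Tendsto (fun n : ℕ => r * Real.exp (-(c * (q-1) * q ^ n))) Filter.atTop (nhds 0) := by
    have := (Real.tendsto_exp_atBot).comp (Filter.tendsto_neg_atTop_atBot.comp h2)
    have h4 := this.const_mul r
    simpa [Function.comp, mul_zero] using h4
  have h4 : ∀ᶠ n : ℕ in Filter.atTop, r * Real.exp (-(c * (q-1) * q ^ n)) ≤ 1/2 :=
    h3.eventually (eventually_le_nhds (by norm_num))
  filter_upwards [h4] with n hn
  have key : r ^ (n+1) * Real.exp (-(c * q ^ (n+1))) =
      (r * Real.exp (-(c * (q-1) * q ^ n))) * (r ^ n * Real.exp (-(c * q ^ n))) := by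
    rw [pow_succ r, pow_succ q,
      show -(c * (q ^ n * q)) = -(c * (q-1) * q^n) + -(c * q^n) by ring, Real.exp_add]
    ring
  rw [Real.norm_eq_abs, Real.norm_eq_abs, abs_of_nonneg (by positivity), abs_of_nonneg (by positivity), key]
  exact mul_le_mul_of_nonneg_right hn (by positivity)

private lemma ae_pos_levy {ν : Measure ℝ} (hl : IsLevyMeasure ν) : ∀ᵐ s ∂ν, 0 < s := by
  rw [ae_iff]
  refine measure_mono_null (fun s hs => ?_) hl.supp
  simpa using not_lt.mp hs

private lemma lap_integrable {ν : Measure ℝ} (hl : IsLevyMeasure ν) {lam : ℝ} (hlam : 0 ≤ lam) :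
    Integrable (fun s => 1 - Real.exp (-(lam * s))) ν := by
  have hmeas : AEStronglyMeasurable (fun s => 1 - Real.exp (-(lam * s))) ν :=
    (continuous_const.sub ((Real.continuous_exp.comp (continuous_const.mul continuous_id).neg))).aestronglyMeasurable
  rw [← integrableOn_univ, ← Set.Iic_union_Ioi (a := (1:ℝ)),
    ← Set.Iic_union_Ioc_eq_Iic (zero_le_one (α := ℝ))]
  refine IntegrableOn.union (IntegrableOn.union ?_ ?_) ?_
  · rw [IntegrableOn, Measure.restrict_eq_zero.mpr hl.supp]
    exact integrable_zero_measure
  · refine Integrable.mono' (hl.integ.const_mul lam) hmeas.restrict ?_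
    rw [ae_restrict_iff' measurableSet_Ioc]
    refine ae_of_all _ (fun s hs => ?_)
    have h1 : 0 ≤ lam * s := mul_nonneg hlam hs.1.le
    have h2 : Real.exp (-(lam * s)) ≤ 1 := Real.exp_le_one_iff.mpr (by linarith)
    have h3 : 1 - lam * s ≤ Real.exp (-(lam * s)) := by
      have := Real.add_one_le_exp (-(lam * s)); linarith
    rw [Real.norm_eq_abs, abs_of_nonneg (by linarith)]
    linarith
  · have hfin : IsFiniteMeasure (ν.restrict (Set.Ioi 1)) := by
      constructor
      rw [Measure.restrict_apply_univ]
      exact hl.tail_fin 1 one_pos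
    refine Integrable.mono' (integrable_const 1) hmeas.restrict ?_
    rw [ae_restrict_iff' measurableSet_Ioi]
    refine ae_of_all _ (fun s hs => ?_)
    have h1 : 0 ≤ lam * s := mul_nonneg hlam (by linarith [hs.out])
    have h2 : Real.exp (-(lam * s)) ≤ 1 := Real.exp_le_one_iff.mpr (by linarith)
    rw [Real.norm_eq_abs, abs_of_nonneg (by linarith)]
    linarith [Real.exp_pos (-(lam * s))]

private lemma lap_nonneg {ν : Measure ℝ} (hl : IsLevyMeasure ν) {lam : ℝ} (hlam : 0 ≤ lam) :
    0 ≤ laplaceExp ν lam := by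
  refine integral_nonneg_of_ae ?_
  filter_upwards [ae_pos_levy hl] with s hs
  have : Real.exp (-(lam * s)) ≤ 1 := Real.exp_le_one_iff.mpr (by nlinarith)
  simp only [Pi.zero_apply]
  linarith

private lemma lap_mono {ν : Measure ℝ} (hl : IsLevyMeasure ν) {lam lam' : ℝ}
    (h0 : 0 ≤ lam) (h : lam ≤ lam') : laplaceExp ν lam ≤ laplaceExp ν lam' := by
  refine integral_mono_ae (lap_integrable hl h0) (lap_integrable hl (h0.trans h)) ?_
  filter_upwards [ae_pos_levy hl] with s hs
  have : Real.exp (-(lam' * s)) ≤ Real.exp (-(lam * s)) := by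
    apply Real.exp_le_exp.mpr; nlinarith
  show 1 - Real.exp (-(lam * s)) ≤ 1 - Real.exp (-(lam' * s))
  linarith

private lemma lap_ge_tail {ν : Measure ℝ} (hl : IsLevyMeasure ν) {lam : ℝ} (hlam : 0 < lam) :
    (1 - Real.exp (-1)) * levyTail ν lam⁻¹ ≤ laplaceExp ν lam := by
  have hinv : (0:ℝ) < lam⁻¹ := by positivity
  have hfin : ν (Set.Ioi lam⁻¹) < ⊤ := hl.tail_fin _ hinv
  have hfinm : IsFiniteMeasure (ν.restrict (Set.Ioi lam⁻¹)) := by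
    constructor; rw [Measure.restrict_apply_univ]; exact hfin
  have h1 : ∫ s in Set.Ioi lam⁻¹, (1 - Real.exp (-1)) ∂ν ≤
      ∫ s in Set.Ioi lam⁻¹, (1 - Real.exp (-(lam * s))) ∂ν := by
    refine setIntegral_mono_on (integrable_const _) ((lap_integrable hl hlam.le).integrableOn)
      measurableSet_Ioi (fun s hs => ?_)
    have h2 : 1 ≤ lam * s := by
      rw [Set.mem_Ioi] at hs
      calc (1:ℝ) = lam * lam⁻¹ := by field_simp
      _ ≤ lam * s := by apply mul_le_mul_of_nonneg_left hs.le hlam.le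
    have := Real.exp_le_exp.mpr (show -(lam*s) ≤ -1 by linarith)
    linarith
  have h2 : ∫ s in Set.Ioi lam⁻¹, (1 - Real.exp (-(lam * s))) ∂ν ≤ laplaceExp ν lam := by
    refine setIntegral_le_integral (lap_integrable hl hlam.le) ?_
    filter_upwards [ae_pos_levy hl] with s hs
    have : Real.exp (-(lam * s)) ≤ 1 := Real.exp_le_one_iff.mpr (by nlinarith)
    simpa using this
  calc (1 - Real.exp (-1)) * levyTail ν lam⁻¹
      = ∫ s in Set.Ioi lam⁻¹, (1 - Real.exp (-1)) ∂ν := by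
        rw [setIntegral_const, levyTail]; rw [smul_eq_mul, measureReal_def]; ring
  _ ≤ laplaceExp ν lam := h1.trans h2

private lemma lap_tendsto_zero {ν : Measure ℝ} (hl : IsLevyMeasure ν) :
    Tendsto (fun n : ℕ => laplaceExp ν (1/(n+1))) atTop (nhds 0) := by
  have key := MeasureTheory.tendsto_integral_of_dominated_convergence
    (F := fun (n : ℕ) (s : ℝ) => 1 - Real.exp (-((1/(n+1)) * s)))
    (f := fun _ => (0:ℝ)) (bound := fun s => 1 - Real.exp (-(1 * s))) (μ := ν)
    ?_ ?_ ?_ ?_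
  · simpa [laplaceExp] using key
  · intro n
    exact (continuous_const.sub ((Real.continuous_exp.comp
      (continuous_const.mul continuous_id).neg))).aestronglyMeasurable
  · exact lap_integrable hl zero_le_one
  · intro n
    filter_upwards [ae_pos_levy hl] with s hs
    have hn : (0:ℝ) < (n:ℝ)+1 := by positivity
    have h0 : (0:ℝ) ≤ (1/((n:ℝ)+1)) * s := by positivity
    have h1 : Real.exp (-((1/((n:ℝ)+1)) * s)) ≤ 1 := Real.exp_le_one_iff.mpr (by linarith)
    have h2 : Real.exp (-(1 * s)) ≤ Real.exp (-((1/((n:ℝ)+1)) * s)) := by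
      apply Real.exp_le_exp.mpr
      have : (1/((n:ℝ)+1)) * s ≤ 1 * s := by
        apply mul_le_mul_of_nonneg_right _ hs.le
        rw [div_le_one hn]; linarith
      linarith
    rw [Real.norm_eq_abs, abs_of_nonneg (by linarith)]
    linarith
  · refine ae_of_all _ (fun s => ?_)
    have : Tendsto (fun n : ℕ => Real.exp (-((1/((n:ℝ)+1)) * s))) atTop (nhds 1) := by
      have h1 : Tendsto (fun n : ℕ => -((1/((n:ℝ)+1)) * s)) atTop (nhds 0) := by
        have : Tendsto (fun n : ℕ => 1 / ((n:ℝ) + 1)) atTop (nhds 0) :=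
          tendsto_one_div_add_atTop_nhds_zero_nat
        have h2 := (this.mul_const s).neg
        simpa using h2
      have := Real.continuous_exp.continuousAt.tendsto.comp h1
      simpa [Function.comp_def] using this
    have h3 := (tendsto_const_nhds (x := (1:ℝ)) (f := atTop)).sub this
    simpa using h3

private lemma ae_nonneg_of {μ : Measure ℝ} (hnn : μ (Set.Iio 0) = 0) : ∀ᵐ s ∂μ, 0 ≤ s := by
  rw [ae_iff]
  refine measure_mono_null (fun s hs => ?_) hnn
  simpa using not_le.mp hs

private lemma exp_integrable (μ : Measure ℝ) [IsFiniteMeasure μ] (hnn : μ (Set.Iio 0) = 0)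
    {lam : ℝ} (hlam : 0 ≤ lam) : Integrable (fun s => Real.exp (-(lam * s))) μ := by
  refine Integrable.mono' (integrable_const 1)
    ((Real.continuous_exp.comp (continuous_const.mul continuous_id).neg).aestronglyMeasurable) ?_
  filter_upwards [ae_nonneg_of hnn] with s hs
  rw [Real.norm_eq_abs, abs_of_nonneg (Real.exp_pos _).le]
  exact Real.exp_le_one_iff.mpr (by nlinarith)

private lemma exp_lintegral (μ : Measure ℝ) [IsFiniteMeasure μ] (hnn : μ (Set.Iio 0) = 0)
    {lam : ℝ} (hlam : 0 ≤ lam) :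
    ∫⁻ s, ENNReal.ofReal (Real.exp (-(lam * s))) ∂μ
      = ENNReal.ofReal (∫ s, Real.exp (-(lam * s)) ∂μ) :=
  (MeasureTheory.ofReal_integral_eq_lintegral_ofReal (exp_integrable μ hnn hlam)
    (ae_of_all _ (fun s => (Real.exp_pos _).le))).symm

private lemma small_ball (μ : Measure ℝ) [IsFiniteMeasure μ] (hnn : μ (Set.Iio 0) = 0)
    {lam ε : ℝ} (hlam : 0 ≤ lam) :
    μ (Set.Iic ε) ≤ ENNReal.ofReal (Real.exp (lam * ε) * ∫ s, Real.exp (-(lam * s)) ∂μ) := by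
  have h1 : μ (Set.Iic ε) = ∫⁻ s, (Set.Iic ε).indicator (fun _ => (1:ℝ≥0∞)) s ∂μ := by
    rw [show ((fun _ => (1:ℝ≥0∞)) : ℝ → ℝ≥0∞) = 1 from rfl, lintegral_indicator_one measurableSet_Iic]
  rw [h1]
  have h2 : ∫⁻ s, (Set.Iic ε).indicator (fun _ => (1:ℝ≥0∞)) s ∂μ
      ≤ ∫⁻ s, ENNReal.ofReal (Real.exp (lam * ε) * Real.exp (-(lam * s))) ∂μ := by
    refine lintegral_mono (fun s => ?_)
    by_cases hs : s ∈ Set.Iic ε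
    · rw [Set.indicator_of_mem hs]
      rw [← Real.exp_add]
      refine ENNReal.one_le_ofReal.mpr (Real.one_le_exp ?_)
      have : s ≤ ε := hs
      nlinarith
    · rw [Set.indicator_of_notMem hs]
      exact zero_le
  refine h2.trans (le_of_eq ?_)
  rw [← integral_const_mul]
  exact (MeasureTheory.ofReal_integral_eq_lintegral_ofReal
    ((exp_integrable μ hnn hlam).const_mul _)
    (ae_of_all _ (fun s => by positivity))).symm

private lemma tail_ball (μ : Measure ℝ) [IsFiniteMeasure μ] (hnn : μ (Set.Iio 0) = 0)
    {lam K : ℝ} (hlam : 0 < lam) (hK : 1 ≤ lam * K) :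
    (1 - Real.exp (-1)) * (μ (Set.Ioi K)).toReal ≤ ∫ s, (1 - Real.exp (-(lam * s))) ∂μ := by
  have hint : Integrable (fun s => 1 - Real.exp (-(lam * s))) μ :=
    (integrable_const 1).sub (exp_integrable μ hnn hlam.le)
  have h1 : ∫ s in Set.Ioi K, (1 - Real.exp (-1)) ∂μ ≤
      ∫ s in Set.Ioi K, (1 - Real.exp (-(lam * s))) ∂μ := by
    refine setIntegral_mono_on (integrable_const _) hint.integrableOn measurableSet_Ioi
      (fun s hs => ?_)
    have hKs : 1 ≤ lam * s := by
      rw [Set.mem_Ioi] at hs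
      calc (1:ℝ) ≤ lam * K := hK
      _ ≤ lam * s := mul_le_mul_of_nonneg_left hs.le hlam.le
    have := Real.exp_le_exp.mpr (show -(lam * s) ≤ -1 by linarith)
    linarith
  have h2 : ∫ s in Set.Ioi K, (1 - Real.exp (-(lam * s))) ∂μ ≤
      ∫ s, (1 - Real.exp (-(lam * s))) ∂μ := by
    refine setIntegral_le_integral hint ?_
    filter_upwards [ae_nonneg_of hnn] with s hs
    have : Real.exp (-(lam * s)) ≤ 1 := Real.exp_le_one_iff.mpr (by nlinarith)
    simp only [Pi.zero_apply]
    linarith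
  calc (1 - Real.exp (-1)) * (μ (Set.Ioi K)).toReal
      = ∫ s in Set.Ioi K, (1 - Real.exp (-1)) ∂μ := by rw [setIntegral_const, smul_eq_mul, measureReal_def]; ring
  _ ≤ _ := h1.trans h2

end Helpers

set_option maxHeartbeats 1600000 in
/-- Theorem 4.7: large-time estimates for the heat kernel of the subordinate process:
q(t,x,y) ≍ e^{-t φ(λ_D)} h(1,x,y) for t ≥ T, under (Poly-R₁) and HK^h_B. -/
theorem large_time_heat_kernel_estimates_bounded
    {E : Type*} [MetricSpace E] [MeasurableSpace E] [BorelSpace E] [ProperSpace E]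
    [TopologicalSpace.SeparableSpace E]
    (m : Measure E) (R_E : ℝ≥0∞) (d₁ d₂ : ℝ)
    (hm : ∀ (x : E) (r : ℝ), 0 < r → 0 < m (Metric.ball x r) ∧ m (Metric.ball x r) < ⊤)
    (hRE : 0 < R_E) (hd₁ : 0 < d₁) (hd : d₁ ≤ d₂) (hVD : VolDoubling m R_E d₁ d₂)
    (D : Set E) (hDopen : IsOpen D) (hDne : D.Nonempty) (hDproper : D ≠ Set.univ)
    (Φ Ψ : ℝ → ℝ) (cA cA' α₁ α₂ cB cB' α₃ α₄ : ℝ)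
    (hΦ0 : Φ 0 = 0) (hΦmono : StrictMonoOn Φ (Set.Ici 0))
    (hΨ0 : Ψ 0 = 0) (hΨmono : StrictMonoOn Ψ (Set.Ici 0))
    (hΦΨ : ∀ r : ℝ, 0 ≤ r → Φ r ≤ Ψ r)
    (hcA : 0 < cA) (hcA' : 0 < cA') (hα₁ : 0 < α₁) (hα₁₂ : α₁ ≤ α₂)
    (hcB : 0 < cB) (hcB' : 0 < cB') (hα₃ : 0 < α₃) (hα₃₄ : α₃ ≤ α₄)
    (hΦsc : WeakScaling Φ cA cA' α₁ α₂) (hΨsc : WeakScaling Ψ cB cB' α₃ α₄)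
    (ΦInv : ℝ → ℝ) (hΦInv : ∀ s : ℝ, 0 < s → 0 < ΦInv s ∧ Φ (ΦInv s) = s)
    (h : ℝ → E → E → ℝ) (cH γ : ℝ) (hcH : 0 < cH) (hγ : 0 ≤ γ)
    (pD : ℝ → E → E → ℝ)
    (hpD_meas : ∀ x y : E, Measurable fun s => pD s x y)
    (hpD_nonneg : ∀ (s : ℝ) (x y : E), 0 ≤ pD s x y)
    (ν : Measure ℝ) (μ : ℝ → Measure ℝ) (hsub : IsSubordinatorLaw ν μ)
    (φInv : ℝ → ℝ) (hφInv : IsPhiInv ν φInv)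
    (R₁ : ℝ≥0∞) (cw cw' β₁ β₂ : ℝ) (hR₁ : 0 < R₁)
    (hcw : 0 < cw) (hcw' : 0 < cw') (hβ₁ : 0 < β₁) (hβ : β₁ ≤ β₂)
    (C₀ cl cexl cu cexu : ℝ) (hC₀ : C₀ = 0 ∨ C₀ = 1)
    (hcl : 0 < cl) (hcexl : 0 < cexl) (hcu : 0 < cu) (hcexu : 0 < cexu)
    (hpoly : PolyCond ν R₁ cw cw' β₁ β₂)
    (hDbdd : Bornology.IsBounded D)
    (hdiam : ENNReal.ofReal (8 * Φ (Metric.diam D)) < R₁)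
    (hbf : IsBoundaryFunction D h (ENNReal.ofReal (4 * Φ (Metric.diam D) + 1)) cH γ)
    (hHK : HKest m D Ψ ΦInv h pD C₀ cl cexl cu cexu (fun t => t ≤ 1))
    (lamD c₅ c₆ : ℝ) (hlamD : 0 < lamD) (hc₅ : 0 < c₅) (hc₆ : 0 < c₆)
    (hHKlarge : HKlarge D h pD lamD c₅ c₆) :
    ∀ T : ℝ, 0 < T → ∃ C : ℝ, 1 ≤ C ∧
      ∀ (t : ℝ) (x y : E), T ≤ t → x ∈ D → y ∈ D →
        C⁻¹ * (Real.exp (-(t * laplaceExp ν lamD)) * h 1 x y) ≤ subq μ pD t x y ∧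
          subq μ pD t x y ≤ C * (Real.exp (-(t * laplaceExp ν lamD)) * h 1 x y) := by
  classical
  intro T hT
  have hlevy := hsub.levy
  have hφnn : ∀ lam : ℝ, 0 ≤ lam → 0 ≤ laplaceExp ν lam := fun lam hl => lap_nonneg hlevy hl
  have h1me : (0:ℝ) < 1 - Real.exp (-1) := by
    have h0 : Real.exp (-1) < 1 := by
      rw [Real.exp_lt_one_iff]; norm_num
    linarith
  obtain ⟨R₀, hR₀pos, hR₀lt⟩ : ∃ R₀ : ℝ, 0 < R₀ ∧ ENNReal.ofReal R₀ < R₁ := by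
    obtain ⟨r, hr0, h1, h2⟩ := ENNReal.lt_iff_exists_real_btwn.mp hR₁
    exact ⟨r, ENNReal.ofReal_pos.mp h1, h2⟩
  have hwR₀nn : 0 ≤ levyTail ν R₀ := ENNReal.toReal_nonneg
  have hwR₀ : 0 < levyTail ν R₀ := by
    rcases eq_or_lt_of_le hwR₀nn with h0 | h0
    · exfalso
      have h2 := (hpoly R₀ R₀ hR₀pos le_rfl hR₀lt).1
      rw [← h0, div_zero, div_self hR₀pos.ne', Real.one_rpow, mul_one] at h2
      linarith
    · exact h0
  have hwlow : ∀ r : ℝ, 0 < r → r ≤ R₀ → cw * (R₀ / r) ^ β₁ * levyTail ν R₀ ≤ levyTail ν r := by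
    intro r hr hrR
    have h2 := (hpoly r R₀ hr hrR hR₀lt).1
    calc cw * (R₀ / r) ^ β₁ * levyTail ν R₀
        ≤ levyTail ν r / levyTail ν R₀ * levyTail ν R₀ :=
          mul_le_mul_of_nonneg_right h2 hwR₀nn
      _ = levyTail ν r := div_mul_cancel₀ _ hwR₀.ne'
  set a0 : ℝ := (1 - Real.exp (-1)) * (cw * R₀ ^ β₁ * levyTail ν R₀) with ha0def
  have ha0 : 0 < a0 := by
    apply mul_pos h1me
    have : (0:ℝ) < R₀ ^ β₁ := Real.rpow_pos_of_pos hR₀pos _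
    positivity
  have hφgrow : ∀ lam : ℝ, R₀⁻¹ ≤ lam → a0 * lam ^ β₁ ≤ laplaceExp ν lam := by
    intro lam hlam
    have hlam0 : 0 < lam := lt_of_lt_of_le (by positivity) hlam
    have h1 : lam⁻¹ ≤ R₀ := by
      rw [← inv_inv R₀]
      exact inv_anti₀ (by positivity) hlam
    have h2 := hwlow lam⁻¹ (by positivity) h1
    have h3 : R₀ / lam⁻¹ = R₀ * lam := by field_simp
    rw [h3, Real.mul_rpow hR₀pos.le hlam0.le] at h2
    have h5 := lap_ge_tail hlevy hlam0
    calc a0 * lam ^ β₁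
        = (1 - Real.exp (-1)) * (cw * (R₀ ^ β₁ * lam ^ β₁) * levyTail ν R₀) := by
          rw [ha0def]; ring
      _ ≤ (1 - Real.exp (-1)) * levyTail ν lam⁻¹ := mul_le_mul_of_nonneg_left h2 h1me.le
      _ ≤ laplaceExp ν lam := h5
  have hφ_large : ∀ M : ℝ, ∃ lam : ℝ, 0 < lam ∧ M ≤ laplaceExp ν lam := by
    intro M
    have h1 : Filter.Tendsto (fun lam : ℝ => a0 * lam ^ β₁) Filter.atTop Filter.atTop :=
      (tendsto_rpow_atTop hβ₁).const_mul_atTop ha0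
    obtain ⟨lam, h2, h3⟩ :=
      ((h1.eventually_ge_atTop M).and (Filter.eventually_ge_atTop R₀⁻¹)).exists
    exact ⟨lam, lt_of_lt_of_le (by positivity) h3, h2.trans (hφgrow lam h3)⟩
  have hδpos : 0 < laplaceExp ν (2 * lamD) - laplaceExp ν lamD := by
    have hIoi : ν (Set.Ioi R₀) ≠ 0 := by
      intro h0
      rw [levyTail, h0, ENNReal.toReal_zero] at hwR₀
      exact lt_irrefl _ hwR₀
    obtain ⟨K0, hK0⟩ : ∃ K0 : ℕ, ν (Set.Ioc R₀ (K0:ℝ)) ≠ 0 := by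
      by_contra hc
      push_neg at hc
      apply hIoi
      have hsub2 : Set.Ioi R₀ ⊆ ⋃ n : ℕ, Set.Ioc R₀ (n:ℝ) := by
        intro s hs
        obtain ⟨n, hn⟩ := exists_nat_ge s
        exact Set.mem_iUnion.mpr ⟨n, hs, hn⟩
      have h4 := (measure_mono hsub2).trans
        (measure_iUnion_le (μ := ν) (s := fun n : ℕ => Set.Ioc R₀ (n:ℝ)))
      simp only [hc, tsum_zero] at h4
      exact le_antisymm h4 zero_le
    have hint1 := lap_integrable hlevy hlamD.le
    have hint2 := lap_integrable hlevy (by positivity : (0:ℝ) ≤ 2 * lamD)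
    have hgint : Integrable (fun s => Real.exp (-(lamD * s)) - Real.exp (-(2 * lamD * s))) ν := by
      have h6 := hint2.sub hint1
      convert h6 using 1
      funext s
      show _ = (1 - Real.exp (-(2 * lamD * s))) - (1 - Real.exp (-(lamD * s)))
      ring
    have hδeq : laplaceExp ν (2 * lamD) - laplaceExp ν lamD
        = ∫ s, (Real.exp (-(lamD * s)) - Real.exp (-(2 * lamD * s))) ∂ν := by
      rw [laplaceExp, laplaceExp, ← integral_sub hint2 hint1]
      congr 1
      funext s
      show (1 - Real.exp (-(2 * lamD * s))) - (1 - Real.exp (-(lamD * s))) = _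
      ring
    set ε₀ : ℝ := Real.exp (-(lamD * K0)) * (1 - Real.exp (-(lamD * R₀))) with hε₀def
    have hε₀ : 0 < ε₀ := by
      apply mul_pos (Real.exp_pos _)
      have h7 : Real.exp (-(lamD * R₀)) < 1 := by rw [Real.exp_lt_one_iff]; nlinarith
      linarith
    have hfinK : ν (Set.Ioc R₀ (K0:ℝ)) < ⊤ :=
      lt_of_le_of_lt (measure_mono Set.Ioc_subset_Ioi_self) (hlevy.tail_fin R₀ hR₀pos)
    have hmeaspos : 0 < (ν (Set.Ioc R₀ (K0:ℝ))).toReal := ENNReal.toReal_pos hK0 hfinK.ne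
    haveI : IsFiniteMeasure (ν.restrict (Set.Ioc R₀ (K0:ℝ))) :=
      ⟨by rw [Measure.restrict_apply_univ]; exact hfinK⟩
    have h1 : ε₀ * (ν (Set.Ioc R₀ (K0:ℝ))).toReal
        ≤ ∫ s in Set.Ioc R₀ (K0:ℝ), (Real.exp (-(lamD * s)) - Real.exp (-(2 * lamD * s))) ∂ν := by
      rw [show ε₀ * (ν (Set.Ioc R₀ (K0:ℝ))).toReal = ∫ _ in Set.Ioc R₀ (K0:ℝ), ε₀ ∂ν by
        rw [setIntegral_const, smul_eq_mul, measureReal_def]; ring]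
      refine setIntegral_mono_on (integrable_const _) hgint.integrableOn measurableSet_Ioc
        (fun s hs => ?_)
      have e1 : Real.exp (-(lamD * K0)) ≤ Real.exp (-(lamD * s)) :=
        Real.exp_le_exp.mpr (by nlinarith [hs.2, hR₀pos, hs.1])
      have e2 : Real.exp (-(lamD * s)) ≤ Real.exp (-(lamD * R₀)) :=
        Real.exp_le_exp.mpr (by nlinarith [hs.1])
      have e2' : Real.exp (-(lamD * R₀)) ≤ 1 := Real.exp_le_one_iff.mpr (by nlinarith)
      have e3 : Real.exp (-(2 * lamD * s)) = Real.exp (-(lamD * s)) * Real.exp (-(lamD * s)) := by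
        rw [← Real.exp_add]; ring_nf
      rw [hε₀def, e3]
      nlinarith [mul_nonneg (sub_nonneg.mpr e1) (sub_nonneg.mpr (e2.trans e2')),
        mul_nonneg (Real.exp_pos (-(lamD * (K0:ℝ)))).le (sub_nonneg.mpr e2),
        Real.exp_pos (-(lamD * s))]
    have h2 : ∫ s in Set.Ioc R₀ (K0:ℝ), (Real.exp (-(lamD * s)) - Real.exp (-(2 * lamD * s))) ∂ν
        ≤ ∫ s, (Real.exp (-(lamD * s)) - Real.exp (-(2 * lamD * s))) ∂ν := by
      refine setIntegral_le_integral hgint ?_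
      filter_upwards [ae_pos_levy hlevy] with s hs
      simp only [Pi.zero_apply]
      have h8 : Real.exp (-(2 * lamD * s)) ≤ Real.exp (-(lamD * s)) :=
        Real.exp_le_exp.mpr (by nlinarith)
      linarith
    rw [hδeq]
    exact lt_of_lt_of_le (mul_pos hε₀ hmeaspos) (h1.trans h2)
  -- geometry: the diameter of D is positive
  obtain ⟨x₀, hx₀D⟩ := hDne
  have hDd0 : 0 ≤ Metric.diam D := Metric.diam_nonneg
  have hDdpos : 0 < Metric.diam D := by
    rcases hDd0.lt_or_eq with h0 | h0
    · exact h0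
    exfalso
    have hsing : ∀ y ∈ D, y = x₀ := by
      intro y hy
      have h1 := Metric.dist_le_diam_of_mem hDbdd hy hx₀D
      rw [← h0] at h1
      exact dist_le_zero.mp h1
    obtain ⟨ε, hε, hball⟩ := Metric.isOpen_iff.mp hDopen x₀ hx₀D
    obtain ⟨R', hR'0, hR'1, hR'2⟩ := ENNReal.lt_iff_exists_real_btwn.mp hRE
    have hR'pos : 0 < R' := ENNReal.ofReal_pos.mp hR'1
    set R : ℝ := min (ε/2) R' with hRdef
    have hRpos : 0 < R := lt_min (by positivity) hR'pos
    obtain ⟨CV, hCV1, hCVd⟩ := hVD 1 le_rfl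
    have hCVpos : (0:ℝ) < CV := lt_of_lt_of_le one_pos hCV1
    have hCVr1 : (1:ℝ) ≤ CV ^ d₁⁻¹ := Real.one_le_rpow hCV1 (by positivity)
    have hden : (0:ℝ) < CV ^ d₁⁻¹ + 1 := by linarith
    set rr : ℝ := R / (CV ^ d₁⁻¹ + 1) with hrrdef
    have hrrpos : 0 < rr := div_pos hRpos hden
    have hrrR : rr ≤ R := by
      rw [hrrdef]
      apply div_le_self hRpos.le
      linarith
    have hballs : ∀ u : ℝ, 0 < u → u ≤ R → Metric.ball x₀ u = {x₀} := by
      intro u hu huR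
      apply Set.Subset.antisymm
      · intro z hz
        have hzD : z ∈ D := hball (by
          rw [Metric.mem_ball] at hz ⊢
          have hb1 : R ≤ ε/2 := min_le_left _ _
          have hb2 : u ≤ ε := by linarith
          linarith)
        simpa using hsing z hzD
      · intro z hz
        rw [Set.mem_singleton_iff] at hz
        rw [hz]
        exact Metric.mem_ball_self hu
    have h2 := (hCVd x₀ rr R hrrpos hrrR (by
      rw [ENNReal.ofReal_one, one_mul]
      exact lt_of_le_of_lt (ENNReal.ofReal_le_ofReal (min_le_right _ _)) hR'2)).1
    have hvpos : 0 < vol m x₀ rr :=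
      ENNReal.toReal_pos (hm x₀ rr hrrpos).1.ne' (hm x₀ rr hrrpos).2.ne
    have hvv : vol m x₀ R = vol m x₀ rr := by
      rw [vol, vol, hballs R hRpos le_rfl, hballs rr hrrpos hrrR]
    rw [hvv, div_self hvpos.ne'] at h2
    have h3 : R / rr = CV ^ d₁⁻¹ + 1 := by
      rw [hrrdef]
      field_simp [hRpos.ne', hden.ne']
    rw [h3] at h2
    have h5 : CV = (CV ^ d₁⁻¹) ^ d₁ := by
      rw [← Real.rpow_mul hCVpos.le, inv_mul_cancel₀ hd₁.ne', Real.rpow_one]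
    have h4 : CV < (CV ^ d₁⁻¹ + 1) ^ d₁ := by
      nth_rewrite 1 [h5]
      exact Real.rpow_lt_rpow (by positivity) (by linarith) hd₁
    have h6 : 1 < CV⁻¹ * (CV ^ d₁⁻¹ + 1) ^ d₁ := by
      rw [show CV⁻¹ * (CV ^ d₁⁻¹ + 1) ^ d₁ = (CV ^ d₁⁻¹ + 1) ^ d₁ / CV by ring]
      exact (one_lt_div hCVpos).mpr h4
    linarith
  have hΦDd : 0 < Φ (Metric.diam D) := by
    have h1 := hΦmono Set.self_mem_Ici (Set.mem_Ici.mpr hDd0) hDdpos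
    rwa [hΦ0] at h1
  have hdmem : ∀ x ∈ D, ∀ y ∈ D, dist x y ≤ Metric.diam D :=
    fun x hx y hy => Metric.dist_le_diam_of_mem hDbdd hx hy
  -- boundary function facts
  have hh01 : ∀ x y : E, x ∈ D → y ∈ D → ∀ s : ℝ, 0 < s → 0 ≤ h s x y ∧ h s x y ≤ 1 :=
    fun x y hx hy s hs => ⟨(hbf.1 s x y hs hx hy).1, (hbf.1 s x y hs hx hy).2⟩
  have hhub : ∀ x y : E, x ∈ D → y ∈ D → ∀ s : ℝ, 0 < s → s ≤ 1 →
      h s x y ≤ cH * h 1 x y * s ^ (-γ) := by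
    intro x y hx hy s hs hs1
    have hhyp := hbf.2.2 x y hx hy s 1 hs hs1 (by
      rw [ENNReal.ofReal_lt_ofReal_iff (by linarith)]
      linarith)
    rw [Real.one_rpow, one_mul] at hhyp
    have hsγ : (0:ℝ) < s ^ γ := Real.rpow_pos_of_pos hs _
    have h1 : h s x y ≤ cH * h 1 x y / s ^ γ :=
      (le_div_iff₀ hsγ).mpr (by rw [mul_comm]; exact hhyp)
    rwa [div_eq_mul_inv, ← Real.rpow_neg hs.le] at h1
  -- inverse of Φ is monotone
  have hr₁ := hΦInv 1 one_pos
  set r₁ : ℝ := ΦInv 1 with hr₁def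
  have hΦInvmono : ∀ s u : ℝ, 0 < s → s ≤ u → ΦInv s ≤ ΦInv u := by
    intro s u hs hsu
    have hu : 0 < u := lt_of_lt_of_le hs hsu
    refine (hΦmono.le_iff_le (Set.mem_Ici.mpr (hΦInv s hs).1.le)
      (Set.mem_Ici.mpr (hΦInv u hu).1.le)).mp ?_
    rw [(hΦInv s hs).2, (hΦInv u hu).2]
    exact hsu
  set R' : ℝ := Metric.diam D + r₁ with hR'def
  have hR'pos : 0 < R' := by
    rw [hR'def]
    linarith [hr₁.1]
  have hvolupper : ∀ x ∈ D, ∀ r : ℝ, 0 < r → r ≤ r₁ → vol m x r ≤ vol m x₀ R' := by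
    intro x hx r hr hrr₁
    refine ENNReal.toReal_mono (hm x₀ R' hR'pos).2.ne (measure_mono ?_)
    intro z hz
    rw [Metric.mem_ball] at hz ⊢
    have h1 := dist_triangle z x x₀
    have h2 := hdmem x hx x₀ hx₀D
    rw [hR'def]
    linarith
  have hv₀pos : 0 < vol m x₀ r₁ :=
    ENNReal.toReal_pos (hm _ _ hr₁.1).1.ne' (hm _ _ hr₁.1).2.ne
  set v₀ : ℝ := vol m x₀ r₁ with hv₀def
  have hvollow0 : ∀ x ∈ D, v₀ ≤ vol m x R' := by
    intro x hx
    refine ENNReal.toReal_mono (hm x R' hR'pos).2.ne (measure_mono ?_)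
    intro z hz
    rw [Metric.mem_ball] at hz ⊢
    have h2 := hdmem x₀ hx₀D x hx
    have h1 := dist_triangle z x₀ x
    rw [hR'def]
    linarith
  obtain ⟨aR, haR1, haRlt⟩ : ∃ a : ℝ, 1 ≤ a ∧ ENNReal.ofReal R' < ENNReal.ofReal a * R_E := by
    by_cases hREtop : R_E = ⊤
    · exact ⟨1, le_rfl, by rw [hREtop, ENNReal.ofReal_one, one_mul]; exact ENNReal.ofReal_lt_top⟩
    · have hREpos : 0 < R_E.toReal := ENNReal.toReal_pos hRE.ne' hREtop
      refine ⟨max 1 ((R' + 1) / R_E.toReal), le_max_left _ _, ?_⟩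
      have h1 : ENNReal.ofReal (max 1 ((R' + 1) / R_E.toReal)) * R_E
          = ENNReal.ofReal (max 1 ((R' + 1) / R_E.toReal) * R_E.toReal) := by
        rw [ENNReal.ofReal_mul (le_trans zero_le_one (le_max_left _ _)),
          ENNReal.ofReal_toReal hREtop]
      rw [h1, ENNReal.ofReal_lt_ofReal_iff
        (mul_pos (lt_of_lt_of_le one_pos (le_max_left _ _)) hREpos)]
      calc R' < R' + 1 := by linarith
        _ = ((R' + 1) / R_E.toReal) * R_E.toReal := by field_simp
        _ ≤ max 1 ((R' + 1) / R_E.toReal) * R_E.toReal :=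
            mul_le_mul_of_nonneg_right (le_max_right _ _) hREpos.le
  obtain ⟨CV, hCV1, hCVd⟩ := hVD aR haR1
  have hCVpos : (0:ℝ) < CV := lt_of_lt_of_le one_pos hCV1
  have hd₂pos : 0 < d₂ := lt_of_lt_of_le hd₁ hd
  set κ₂ : ℝ := α₁⁻¹ * d₂ with hκ₂def
  have hκ₂pos : 0 < κ₂ := mul_pos (inv_pos.mpr hα₁) hd₂pos
  set c_v : ℝ := CV⁻¹ * v₀ * ((r₁ / R') ^ d₂ * (cA ^ α₁⁻¹) ^ d₂) with hc_vdef
  have hc_vpos : 0 < c_v := by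
    have h1 : (0:ℝ) < (r₁ / R') ^ d₂ := Real.rpow_pos_of_pos (div_pos hr₁.1 hR'pos) _
    have h2 : (0:ℝ) < (cA ^ α₁⁻¹) ^ d₂ := Real.rpow_pos_of_pos (Real.rpow_pos_of_pos hcA _) _
    rw [hc_vdef]
    exact mul_pos (mul_pos (inv_pos.mpr hCVpos) hv₀pos) (mul_pos h1 h2)
  have hvollow : ∀ x ∈ D, ∀ s : ℝ, 0 < s → s ≤ 1 → c_v * s ^ κ₂ ≤ vol m x (ΦInv s) := by
    intro x hx s hs hs1
    have hr : 0 < ΦInv s := (hΦInv s hs).1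
    have hΦr : Φ (ΦInv s) = s := (hΦInv s hs).2
    have hrr₁ : ΦInv s ≤ r₁ := hΦInvmono s 1 hs hs1
    have hrR' : ΦInv s ≤ R' := by rw [hR'def]; linarith
    set r : ℝ := ΦInv s with hrdef2
    have hdb := (hCVd x r R' hr hrR' haRlt).2
    have hvrpos : 0 < vol m x r := ENNReal.toReal_pos (hm x r hr).1.ne' (hm x r hr).2.ne
    have h2 : vol m x R' ≤ CV * (R' / r) ^ d₂ * vol m x r := (div_le_iff₀ hvrpos).mp hdb
    have hB : (0:ℝ) < (cA * s) ^ α₁⁻¹ := Real.rpow_pos_of_pos (by positivity) _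
    have hsc := (hΦsc r r₁ hr hrr₁).1
    rw [hΦr, hr₁.2] at hsc
    have key : r₁ / r ≤ ((cA * s)⁻¹) ^ α₁⁻¹ := by
      have h4 : (r₁ / r) ^ α₁ ≤ (cA * s)⁻¹ := by
        have h5 := (le_div_iff₀' hcA).mpr hsc
        calc (r₁ / r) ^ α₁ ≤ (1 / s) / cA := h5
          _ = (cA * s)⁻¹ := by field_simp
      have h5 := Real.rpow_le_rpow (Real.rpow_nonneg (div_nonneg hr₁.1.le hr.le) _) h4
        (by positivity : (0:ℝ) ≤ α₁⁻¹)
      rwa [Real.rpow_rpow_inv (div_nonneg hr₁.1.le hr.le) hα₁.ne'] at h5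
    have h6 : r₁ * (cA * s) ^ α₁⁻¹ ≤ r := by
      rw [Real.inv_rpow (by positivity : (0:ℝ) ≤ cA * s)] at key
      rw [div_le_iff₀ hr] at key
      calc r₁ * (cA * s) ^ α₁⁻¹ ≤ ((cA * s) ^ α₁⁻¹)⁻¹ * r * (cA * s) ^ α₁⁻¹ :=
            mul_le_mul_of_nonneg_right key hB.le
        _ = r := by field_simp
    have h7 : c_v * s ^ κ₂ = CV⁻¹ * v₀ * ((r₁ * (cA * s) ^ α₁⁻¹) / R') ^ d₂ := by
      rw [hc_vdef, hκ₂def,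
        show (r₁ * (cA * s) ^ α₁⁻¹) / R' = (r₁ / R') * (cA ^ α₁⁻¹ * s ^ α₁⁻¹) by
          rw [← Real.mul_rpow hcA.le hs.le]; ring,
        Real.mul_rpow (div_nonneg hr₁.1.le hR'pos.le) (by positivity),
        Real.mul_rpow (by positivity) (by positivity), ← Real.rpow_mul hs.le]
      ring
    have h8 : ((r₁ * (cA * s) ^ α₁⁻¹) / R') ^ d₂ ≤ (r / R') ^ d₂ :=
      Real.rpow_le_rpow (div_nonneg (mul_nonneg hr₁.1.le hB.le) hR'pos.le)
        ((div_le_div_iff_of_pos_right hR'pos).mpr h6) hd₂pos.le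
    have hP : (0:ℝ) < (r / R') ^ d₂ := Real.rpow_pos_of_pos (by positivity) _
    have h10 : (R' / r) ^ d₂ = ((r / R') ^ d₂)⁻¹ := by
      rw [← Real.inv_rpow (by positivity), inv_div]
    rw [h10] at h2
    have h11 := hvollow0 x hx
    have h12 : CV⁻¹ * (r / R') ^ d₂ * vol m x R'
        ≤ CV⁻¹ * (r / R') ^ d₂ * (CV * ((r / R') ^ d₂)⁻¹ * vol m x r) :=
      mul_le_mul_of_nonneg_left h2 (mul_nonneg (inv_nonneg.mpr hCVpos.le) hP.le)
    have h13 : CV⁻¹ * (r / R') ^ d₂ * (CV * ((r / R') ^ d₂)⁻¹ * vol m x r) = vol m x r := by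
      field_simp [hCVpos.ne', hP.ne']
    calc c_v * s ^ κ₂ = CV⁻¹ * v₀ * ((r₁ * (cA * s) ^ α₁⁻¹) / R') ^ d₂ := h7
      _ ≤ CV⁻¹ * v₀ * (r / R') ^ d₂ := mul_le_mul_of_nonneg_left h8
          (mul_nonneg (inv_nonneg.mpr hCVpos.le) hv₀pos.le)
      _ ≤ CV⁻¹ * vol m x R' * (r / R') ^ d₂ := by
          apply mul_le_mul_of_nonneg_right
            (mul_le_mul_of_nonneg_left h11 (inv_nonneg.mpr hCVpos.le)) hP.le
      _ = CV⁻¹ * (r / R') ^ d₂ * vol m x R' := by ring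
      _ ≤ vol m x r := h12.trans_eq h13
  set Vmax : ℝ := vol m x₀ R' with hVmaxdef
  have hVmaxpos : 0 < Vmax :=
    ENNReal.toReal_pos (hm _ _ hR'pos).1.ne' (hm _ _ hR'pos).2.ne
  set κ : ℝ := γ + κ₂ with hκdef
  have hκpos : 0 < κ := by rw [hκdef]; linarith
  set M : ℝ := cu * cH * c_v⁻¹ with hMdef
  have hMpos : 0 < M := by
    rw [hMdef]
    exact mul_pos (mul_pos hcu hcH) (inv_pos.mpr hc_vpos)
  have hpDub : ∀ x ∈ D, ∀ y ∈ D, ∀ s : ℝ, 0 < s → s ≤ 1 →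
      pD s x y ≤ M * h 1 x y * s ^ (-κ) := by
    intro x hx y hy s hs hs1
    have hest := (hHK s x y hs hs1 hx hy).2
    have hhs := hh01 x y hx hy s hs
    have hh1 := hh01 x y hx hy 1 one_pos
    have hcvs : (0:ℝ) < c_v * s ^ κ₂ := mul_pos hc_vpos (Real.rpow_pos_of_pos hs _)
    have hA : (vol m x (ΦInv s))⁻¹ ≤ (c_v * s ^ κ₂)⁻¹ :=
      inv_anti₀ hcvs (hvollow x hx s hs hs1)
    have hsγ : (0:ℝ) ≤ s ^ (-γ) := Real.rpow_nonneg hs.le _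
    have e1 : (s ^ κ₂)⁻¹ = s ^ (-κ₂) := (Real.rpow_neg hs.le κ₂).symm
    have e2 : s ^ (-γ) * s ^ (-κ₂) = s ^ (-(γ + κ₂)) := by
      rw [← Real.rpow_add hs]
      congr 1
      ring
    calc pD s x y ≤ cu * h s x y * min ((vol m x (ΦInv s))⁻¹)
          (C₀ * s / (vol m x (dist x y) * Ψ (dist x y)) +
            (vol m x (ΦInv s))⁻¹ * Real.exp (-(cexu * dist x y ^ 2 / ΦInv s ^ 2))) := hest
      _ ≤ cu * h s x y * (vol m x (ΦInv s))⁻¹ :=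
          mul_le_mul_of_nonneg_left (min_le_left _ _) (mul_nonneg hcu.le hhs.1)
      _ ≤ cu * (cH * h 1 x y * s ^ (-γ)) * (c_v * s ^ κ₂)⁻¹ := by
          apply mul_le_mul
          · exact mul_le_mul_of_nonneg_left (hhub x y hx hy s hs hs1) hcu.le
          · exact hA
          · exact inv_nonneg.mpr ENNReal.toReal_nonneg
          · exact mul_nonneg hcu.le (mul_nonneg (mul_nonneg hcH.le hh1.1) hsγ)
          
      _ = M * h 1 x y * s ^ (-κ) := by
          rw [hMdef, hκdef, mul_inv, e1,
            show cu * (cH * h 1 x y * s ^ (-γ)) * (c_v⁻¹ * s ^ (-κ₂))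
              = cu * cH * c_v⁻¹ * h 1 x y * (s ^ (-γ) * s ^ (-κ₂)) from by ring, e2]
  -- constants for the dyadic decomposition
  set b : ℝ := max lamD R₀⁻¹ with hbdef
  have hbpos : 0 < b := lt_of_lt_of_le hlamD (le_max_left _ _)
  set q : ℝ := (2:ℝ) ^ β₁ with hqdef
  have hq1 : 1 < q := by
    rw [hqdef]
    exact (Real.one_lt_rpow_iff_of_pos two_pos).mpr (Or.inl ⟨one_lt_two, hβ₁⟩)
  set c₈ : ℝ := T * (a0 * b ^ β₁) with hc₈def
  have hc₈pos : 0 < c₈ := mul_pos hT (mul_pos ha0 (Real.rpow_pos_of_pos hbpos _))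
  set R2 : ℝ := (2:ℝ) ^ κ with hR2def
  have hR2pos : 0 < R2 := Real.rpow_pos_of_pos two_pos _
  have hsumm : Summable (fun n : ℕ => R2 ^ n * Real.exp (-(c₈ * q ^ n))) :=
    summable_aux hc₈pos hq1 hR2pos
  set S : ℝ := ∑' n : ℕ, R2 ^ n * Real.exp (-(c₈ * q ^ n)) with hSdef
  have hSnn : 0 ≤ S := tsum_nonneg (fun n => by positivity)
  have honele : ∀ n : ℕ, (1:ℝ) ≤ 2 ^ n := fun n => one_le_pow₀ one_le_two
  have hbig : ∀ n : ℕ, a0 * b ^ β₁ * q ^ n ≤ laplaceExp ν (b * 2 ^ n) := by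
    intro n
    have h1 : R₀⁻¹ ≤ b * 2 ^ n := by
      calc R₀⁻¹ ≤ b := le_max_right _ _
        _ = b * 1 := (mul_one b).symm
        _ ≤ b * 2 ^ n := mul_le_mul_of_nonneg_left (honele n) hbpos.le
    have h3 := hφgrow (b * 2 ^ n) h1
    have h4 : (b * 2 ^ n) ^ β₁ = b ^ β₁ * q ^ n := by
      rw [Real.mul_rpow hbpos.le (by positivity), hqdef]
      congr 1
      rw [← Real.rpow_natCast (2:ℝ) n, ← Real.rpow_mul two_pos.le, mul_comm,
        Real.rpow_mul two_pos.le, Real.rpow_natCast]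
    rw [h4] at h3
    calc a0 * b ^ β₁ * q ^ n = a0 * (b ^ β₁ * q ^ n) := by ring
      _ ≤ _ := h3
  have hmono2 : ∀ n : ℕ, laplaceExp ν lamD ≤ laplaceExp ν (b * 2 ^ n) := by
    intro n
    apply lap_mono hlevy hlamD.le
    calc lamD ≤ b := le_max_left _ _
      _ = b * 1 := (mul_one b).symm
      _ ≤ b * 2 ^ n := mul_le_mul_of_nonneg_left (honele n) hbpos.le
  -- choice of t₀
  set t₀ : ℝ := max T ((2 * lamD + Real.log 2) / (laplaceExp ν (2 * lamD) - laplaceExp ν lamD))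
    with ht₀def
  have hTt₀ : T ≤ t₀ := le_max_left _ _
  have ht₀pos : 0 < t₀ := lt_of_lt_of_le hT hTt₀
  -- choice of lam₁ and s₁ for the intermediate range
  obtain ⟨lam₁, hlam₁pos, hlam₁⟩ := hφ_large (Real.log 8 / T)
  set s₁ : ℝ := min (Real.log 2 / lam₁) 1 with hs₁def
  have hs₁pos : 0 < s₁ := lt_min (div_pos (Real.log_pos one_lt_two) hlam₁pos) one_pos
  have hs₁le1 : s₁ ≤ 1 := min_le_right _ _
  have hlams₁ : lam₁ * s₁ ≤ Real.log 2 := by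
    calc lam₁ * s₁ ≤ lam₁ * (Real.log 2 / lam₁) :=
        mul_le_mul_of_nonneg_left (min_le_left _ _) hlam₁pos.le
      _ = Real.log 2 := by field_simp
  -- choice of K for the intermediate range
  set c₉ : ℝ := 1 - (1 - Real.exp (-1)) / 4 with hc₉def
  have hc₉pos : 0 < c₉ := by
    rw [hc₉def]
    have := Real.exp_pos (-1:ℝ)
    linarith only [this]
  have hc₉lt1 : c₉ < 1 := by rw [hc₉def]; linarith only [h1me]
  have hη₀pos : 0 < -Real.log c₉ / t₀ := by
    apply div_pos _ ht₀pos
    have := Real.log_neg hc₉pos hc₉lt1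
    linarith only [this]
  obtain ⟨nK, hnK⟩ : ∃ n : ℕ, laplaceExp ν (1/((n:ℝ)+1)) < -Real.log c₉ / t₀ :=
    ((lap_tendsto_zero hlevy).eventually (eventually_lt_nhds hη₀pos)).exists
  set K : ℝ := (nK:ℝ) + 1 with hKdef
  have hKpos : 0 < K := by rw [hKdef]; positivity
  have hK1 : 1 ≤ K := by rw [hKdef]; linarith only [Nat.cast_nonneg (α := ℝ) nK]
  have hlamK : laplaceExp ν K⁻¹ < -Real.log c₉ / t₀ := by
    rw [hKdef, ← one_div]
    exact hnK
  -- lower bound for p_D on the window [s₁, K]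
  set e₀ : ℝ := Real.exp (-(cexl * Metric.diam D ^ 2 / ΦInv s₁ ^ 2)) with he₀def
  have he₀pos : 0 < e₀ := Real.exp_pos _
  have hΦs₁pos : 0 < ΦInv s₁ := (hΦInv s₁ hs₁pos).1
  have he₀le1 : e₀ ≤ 1 := by
    rw [he₀def]
    apply Real.exp_le_one_iff.mpr
    have h1 : 0 ≤ cexl * Metric.diam D ^ 2 / ΦInv s₁ ^ 2 :=
      div_nonneg (mul_nonneg hcexl.le (sq_nonneg _)) (sq_nonneg _)
    linarith only [h1]
  set c_mid : ℝ := min (cl * (Vmax⁻¹ * e₀)) (c₅ * Real.exp (-(lamD * K))) with hcmiddef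
  have hcmidpos : 0 < c_mid := lt_min
    (mul_pos hcl (mul_pos (inv_pos.mpr hVmaxpos) he₀pos)) (mul_pos hc₅ (Real.exp_pos _))
  have hpDmid : ∀ x ∈ D, ∀ y ∈ D, ∀ s : ℝ, s₁ ≤ s → s ≤ K → c_mid * h 1 x y ≤ pD s x y := by
    intro x hx y hy s hss₁ hsK
    have hs : 0 < s := lt_of_lt_of_le hs₁pos hss₁
    have hh1 := hh01 x y hx hy 1 one_pos
    by_cases hs1 : s ≤ 1
    · have hest := (hHK s x y hs hs1 hx hy).1
      have hΦs : 0 < ΦInv s := (hΦInv s hs).1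
      have hΦmono2 : ΦInv s₁ ≤ ΦInv s := hΦInvmono s₁ s hs₁pos hss₁
      have hvub : vol m x (ΦInv s) ≤ Vmax := hvolupper x hx (ΦInv s) hΦs (hΦInvmono s 1 hs hs1)
      have hvpos : 0 < vol m x (ΦInv s) :=
        ENNReal.toReal_pos (hm _ _ hΦs).1.ne' (hm _ _ hΦs).2.ne
      have hAlow : Vmax⁻¹ ≤ (vol m x (ΦInv s))⁻¹ := inv_anti₀ hvpos hvub
      have hexp : e₀ ≤ Real.exp (-(cexl * dist x y ^ 2 / ΦInv s ^ 2)) := by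
        rw [he₀def]
        apply Real.exp_le_exp.mpr
        apply neg_le_neg
        apply div_le_div₀ (mul_nonneg hcexl.le (sq_nonneg _)) ?_ (pow_pos hΦs₁pos 2) ?_
        · apply mul_le_mul_of_nonneg_left _ hcexl.le
          exact pow_le_pow_left₀ dist_nonneg (hdmem x hx y hy) 2
        · exact pow_le_pow_left₀ hΦs₁pos.le hΦmono2 2
      have hfirst : 0 ≤ C₀ * s / (vol m x (dist x y) * Ψ (dist x y)) := by
        apply div_nonneg
        · rcases hC₀ with h'|h' <;> rw [h']
          · rw [zero_mul]
          · rw [one_mul]; exact hs.le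
        · apply mul_nonneg ENNReal.toReal_nonneg
          have hdnn : (0:ℝ) ≤ dist x y := dist_nonneg
          rcases eq_or_lt_of_le hdnn with hd0 | hd0
          · rw [← hd0, hΨ0]
          · have h3 := hΨmono Set.self_mem_Ici (Set.mem_Ici.mpr hdnn) hd0
            rw [hΨ0] at h3
            linarith only [h3]
      have hsecond : Vmax⁻¹ * e₀ ≤
          (vol m x (ΦInv s))⁻¹ * Real.exp (-(cexl * dist x y ^ 2 / ΦInv s ^ 2)) :=
        mul_le_mul hAlow hexp he₀pos.le (inv_nonneg.mpr ENNReal.toReal_nonneg)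
      have hminlow : Vmax⁻¹ * e₀ ≤ min ((vol m x (ΦInv s))⁻¹)
          (C₀ * s / (vol m x (dist x y) * Ψ (dist x y)) +
            (vol m x (ΦInv s))⁻¹ * Real.exp (-(cexl * dist x y ^ 2 / ΦInv s ^ 2))) := by
        apply le_min
        · exact (mul_le_of_le_one_right (inv_nonneg.mpr hVmaxpos.le) he₀le1).trans hAlow
        · linarith only [hfirst, hsecond]
      have hh1s : h 1 x y ≤ h s x y := hbf.2.1 x y hx hy s 1 hs hs1
      calc c_mid * h 1 x y ≤ cl * (Vmax⁻¹ * e₀) * h 1 x y :=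
            mul_le_mul_of_nonneg_right (min_le_left _ _) hh1.1
        _ = cl * ((Vmax⁻¹ * e₀) * h 1 x y) := by ring
        _ ≤ cl * (min ((vol m x (ΦInv s))⁻¹)
            (C₀ * s / (vol m x (dist x y) * Ψ (dist x y)) +
              (vol m x (ΦInv s))⁻¹ * Real.exp (-(cexl * dist x y ^ 2 / ΦInv s ^ 2)))
            * h s x y) := by
            apply mul_le_mul_of_nonneg_left _ hcl.le
            exact mul_le_mul hminlow hh1s hh1.1
              (le_trans (mul_nonneg (inv_nonneg.mpr hVmaxpos.le) he₀pos.le) hminlow)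
        _ = cl * h s x y * min ((vol m x (ΦInv s))⁻¹)
            (C₀ * s / (vol m x (dist x y) * Ψ (dist x y)) +
              (vol m x (ΦInv s))⁻¹ * Real.exp (-(cexl * dist x y ^ 2 / ΦInv s ^ 2))) := by ring
        _ ≤ pD s x y := hest
    · push_neg at hs1
      have hest := (hHKlarge s x y hs1.le hx hy).1
      calc c_mid * h 1 x y ≤ c₅ * Real.exp (-(lamD * K)) * h 1 x y :=
            mul_le_mul_of_nonneg_right (min_le_right _ _) hh1.1
        _ ≤ c₅ * Real.exp (-(lamD * s)) * h 1 x y := by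
            apply mul_le_mul_of_nonneg_right _ hh1.1
            apply mul_le_mul_of_nonneg_left _ hc₅.le
            exact Real.exp_le_exp.mpr (neg_le_neg (mul_le_mul_of_nonneg_left hsK hlamD.le))
        _ ≤ pD s x y := hest
  -- final constants
  set AA : ℝ := R2 * Real.exp b * Real.exp (T * laplaceExp ν lamD) with hAAdef
  have hAApos : 0 < AA := by
    rw [hAAdef]
    exact mul_pos (mul_pos hR2pos (Real.exp_pos _)) (Real.exp_pos _)
  set CU : ℝ := M * (AA * S) + c₆ with hCUdef
  have hCUnn : 0 ≤ CU := by
    rw [hCUdef]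
    exact add_nonneg (mul_nonneg hMpos.le (mul_nonneg hAApos.le hSnn)) hc₆.le
  set cL : ℝ := min (c₅ / 2) (c_mid / 2) with hcLdef
  have hcLpos : 0 < cL := lt_min (by linarith only [hc₅]) (by linarith only [hcmidpos])
  set C : ℝ := max (max cL⁻¹ CU) 1 with hCdef
  refine ⟨C, le_max_right _ _, ?_⟩
  intro t x y ht hx hy
  have htpos : 0 < t := lt_of_lt_of_le hT ht
  haveI hprob := hsub.prob t htpos
  have hμnn := hsub.nonneg t htpos
  have hh1b := hh01 x y hx hy 1 one_pos
  set Ee : ℝ := Real.exp (-(t * laplaceExp ν lamD)) with hEedef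
  have hEpos : 0 < Ee := Real.exp_pos _
  have hEle1 : Ee ≤ 1 := by
    rw [hEedef]
    apply Real.exp_le_one_iff.mpr
    have := mul_nonneg htpos.le (hφnn lamD hlamD.le)
    linarith only [this]
  set Ltot : ℝ≥0∞ := ∫⁻ s, ENNReal.ofReal (pD s x y) ∂(μ t) with hLdef
  have hq_eq : subq μ pD t x y = Ltot.toReal := by
    rw [subq, integral_eq_lintegral_of_nonneg_ae (ae_of_all _ (fun s => hpD_nonneg s x y))
      (hpD_meas x y).aestronglyMeasurable]
  have hlapt : ∀ lam : ℝ, 0 ≤ lam →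
      (∫ s, Real.exp (-(lam * s)) ∂(μ t)) = Real.exp (-(t * laplaceExp ν lam)) :=
    fun lam hl => hsub.laplace t lam htpos hl
  have hsball : ∀ lam ε : ℝ, 0 ≤ lam →
      μ t (Set.Iic ε) ≤ ENNReal.ofReal (Real.exp (lam * ε) *
        Real.exp (-(t * laplaceExp ν lam))) := by
    intro lam ε hl
    have h1 := small_ball (μ t) hμnn (lam := lam) (ε := ε) hl
    rwa [hlapt lam hl] at h1
  -- no mass at or below 0
  have hIic0 : μ t (Set.Iic 0) = 0 := by
    apply le_antisymm _ zero_le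
    refine ENNReal.le_of_forall_pos_le_add (fun ε hε _ => ?_)
    obtain ⟨lam, hlpos, hlge⟩ := hφ_large (-Real.log (ε:ℝ) / t)
    have h1 := hsball lam 0 hlpos.le
    rw [mul_zero, Real.exp_zero, one_mul] at h1
    refine h1.trans ?_
    rw [zero_add]
    have h2 : Real.exp (-(t * laplaceExp ν lam)) ≤ (ε:ℝ) := by
      rw [← Real.exp_log (show (0:ℝ) < (ε:ℝ) from hε)]
      apply Real.exp_le_exp.mpr
      have h3 := (div_le_iff₀ htpos).mp hlge
      have h3' : -Real.log (ε:ℝ) ≤ t * laplaceExp ν lam := by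
        rw [mul_comm]; exact h3
      linarith only [h3']
    exact le_trans (ENNReal.ofReal_le_ofReal h2) (le_of_eq ENNReal.ofReal_coe_nnreal)
  have hGmeas : Measurable (fun s : ℝ => ENNReal.ofReal (Real.exp (-(lamD * s)))) :=
    (Real.continuous_exp.comp (continuous_const.mul continuous_id).neg).measurable.ennreal_ofReal
  have hGtot : ∫⁻ s, ENNReal.ofReal (Real.exp (-(lamD * s))) ∂(μ t) = ENNReal.ofReal Ee := by
    rw [exp_lintegral (μ t) hμnn hlamD.le, hlapt lamD hlamD.le, hEedef]
  -- dyadic estimate on (0,1]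
  have hκmeas : Measurable (fun s : ℝ => (ENNReal.ofReal s) ^ (-κ)) :=
    ENNReal.continuous_rpow_const.measurable.comp ENNReal.measurable_ofReal
  have hterm : ∀ n : ℕ, (∫⁻ s in Set.Ioc ((1/2:ℝ)^(n+1)) ((1/2:ℝ)^n),
        (ENNReal.ofReal s) ^ (-κ) ∂(μ t))
      ≤ ENNReal.ofReal ((Ee * AA) * (R2 ^ n * Real.exp (-(c₈ * q ^ n)))) := by
    intro n
    have hs0 : (0:ℝ) < (1/2:ℝ)^(n+1) := by positivity
    have hPn : ((1/2:ℝ)^(n+1)) ^ (-κ) = R2 * R2 ^ n := by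
      have e1 : ((1/2:ℝ)^(n+1) : ℝ) = ((2:ℝ)^(n+1))⁻¹ := by
        rw [one_div, inv_pow]
      have e2 : (((2:ℝ)^(n+1))⁻¹ : ℝ) ^ (-κ) = (((2:ℝ)^(n+1) : ℝ) ^ (-κ))⁻¹ :=
        Real.inv_rpow (by positivity) _
      have e3 : ((((2:ℝ)^(n+1) : ℝ)) ^ (-κ))⁻¹ = ((2:ℝ)^(n+1) : ℝ) ^ κ := by
        rw [Real.rpow_neg (by positivity), inv_inv]
      have e4 : ((2:ℝ)^(n+1) : ℝ) ^ κ = R2 ^ (n+1) := by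
        rw [hR2def, ← Real.rpow_natCast (2:ℝ) (n+1), ← Real.rpow_mul two_pos.le, mul_comm,
          Real.rpow_mul two_pos.le, Real.rpow_natCast]
      rw [e1, e2, e3, e4, pow_succ]
      ring
    have hmuIn : μ t (Set.Ioc ((1/2:ℝ)^(n+1)) ((1/2:ℝ)^n)) ≤
        ENNReal.ofReal (Real.exp b * Real.exp (-(t * laplaceExp ν (b * 2^n)))) := by
      refine le_trans (measure_mono Set.Ioc_subset_Iic_self) ?_
      refine le_trans (hsball (b * 2^n) ((1/2:ℝ)^n) (by positivity)) ?_
      apply le_of_eq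
      congr 2
      rw [mul_assoc, ← mul_pow]
      norm_num
    have hexp2 : Real.exp (-(t * laplaceExp ν (b * 2^n))) ≤
        Ee * (Real.exp (T * laplaceExp ν lamD) * Real.exp (-(c₈ * q^n))) := by
      rw [hEedef, ← Real.exp_add, ← Real.exp_add]
      apply Real.exp_le_exp.mpr
      have h1 := hbig n
      have h2 := hmono2 n
      rw [hc₈def]
      linarith only [mul_nonneg (sub_nonneg.mpr ht) (sub_nonneg.mpr h2),
        mul_nonneg hT.le (sub_nonneg.mpr h1)]
    calc (∫⁻ s in Set.Ioc ((1/2:ℝ)^(n+1)) ((1/2:ℝ)^n), (ENNReal.ofReal s) ^ (-κ) ∂(μ t))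
        ≤ ∫⁻ _ in Set.Ioc ((1/2:ℝ)^(n+1)) ((1/2:ℝ)^n),
            ENNReal.ofReal (((1/2:ℝ)^(n+1)) ^ (-κ)) ∂(μ t) := by
          refine setLIntegral_mono measurable_const (fun s hs => ?_)
          rw [ENNReal.ofReal_rpow_of_pos (lt_trans hs0 hs.1)]
          refine ENNReal.ofReal_le_ofReal ?_
          have h1 : ((1/2:ℝ)^(n+1)) ^ κ ≤ s ^ κ := Real.rpow_le_rpow hs0.le hs.1.le hκpos.le
          have h2 : (0:ℝ) < ((1/2:ℝ)^(n+1)) ^ κ := Real.rpow_pos_of_pos hs0 _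
          rw [Real.rpow_neg hs0.le, Real.rpow_neg (le_trans hs0.le hs.1.le)]
          exact inv_anti₀ h2 h1
      _ = ENNReal.ofReal (((1/2:ℝ)^(n+1)) ^ (-κ)) *
            μ t (Set.Ioc ((1/2:ℝ)^(n+1)) ((1/2:ℝ)^n)) := setLIntegral_const _ _
      _ ≤ ENNReal.ofReal (((1/2:ℝ)^(n+1)) ^ (-κ)) *
            ENNReal.ofReal (Real.exp b * Real.exp (-(t * laplaceExp ν (b * 2^n)))) :=
          mul_le_mul_right hmuIn _
      _ ≤ ENNReal.ofReal (((1/2:ℝ)^(n+1)) ^ (-κ)) *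
            ENNReal.ofReal (Real.exp b * (Ee * (Real.exp (T * laplaceExp ν lamD) *
              Real.exp (-(c₈ * q^n))))) := by
          apply mul_le_mul_right
          apply ENNReal.ofReal_le_ofReal
          exact mul_le_mul_of_nonneg_left hexp2 (Real.exp_pos b).le
      _ = ENNReal.ofReal (((1/2:ℝ)^(n+1)) ^ (-κ) * (Real.exp b *
            (Ee * (Real.exp (T * laplaceExp ν lamD) * Real.exp (-(c₈ * q^n)))))) := by
          rw [← ENNReal.ofReal_mul (Real.rpow_nonneg hs0.le _)]
      _ = ENNReal.ofReal ((Ee * AA) * (R2 ^ n * Real.exp (-(c₈ * q ^ n)))) := by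
          rw [hPn, hAAdef]
          congr 1
          ring
  have hIocbound : ∫⁻ s in Set.Ioc (0:ℝ) 1, (ENNReal.ofReal s) ^ (-κ) ∂(μ t)
      ≤ ENNReal.ofReal (Ee * AA * S) := by
    calc ∫⁻ s in Set.Ioc (0:ℝ) 1, (ENNReal.ofReal s) ^ (-κ) ∂(μ t)
        ≤ ∫⁻ s in ⋃ n : ℕ, Set.Ioc ((1/2:ℝ)^(n+1)) ((1/2:ℝ)^n),
            (ENNReal.ofReal s) ^ (-κ) ∂(μ t) := lintegral_mono_set cover_Ioc
      _ ≤ ∑' n : ℕ, ∫⁻ s in Set.Ioc ((1/2:ℝ)^(n+1)) ((1/2:ℝ)^n),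
            (ENNReal.ofReal s) ^ (-κ) ∂(μ t) := lintegral_iUnion_le _ _
      _ ≤ ∑' n : ℕ, ENNReal.ofReal ((Ee * AA) * (R2 ^ n * Real.exp (-(c₈ * q ^ n)))) :=
          ENNReal.tsum_le_tsum hterm
      _ = ∑' n : ℕ, ENNReal.ofReal (Ee * AA) *
            ENNReal.ofReal (R2 ^ n * Real.exp (-(c₈ * q ^ n))) := by
          congr 1
          funext n
          rw [ENNReal.ofReal_mul (mul_nonneg hEpos.le hAApos.le)]
      _ = ENNReal.ofReal (Ee * AA) *
            ∑' n : ℕ, ENNReal.ofReal (R2 ^ n * Real.exp (-(c₈ * q ^ n))) :=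
          ENNReal.tsum_mul_left
      _ = ENNReal.ofReal (Ee * AA) * ENNReal.ofReal S := by
          rw [← ENNReal.ofReal_tsum_of_nonneg (fun n => by positivity) hsumm, hSdef]
      _ = ENNReal.ofReal (Ee * AA * S) := (ENNReal.ofReal_mul
          (mul_nonneg hEpos.le hAApos.le)).symm
  -- upper bound over (1,∞)
  have hupIoi : ∫⁻ s in Set.Ioi (1:ℝ), ENNReal.ofReal (pD s x y) ∂(μ t)
      ≤ ENNReal.ofReal (c₆ * h 1 x y * Ee) := by
    calc ∫⁻ s in Set.Ioi (1:ℝ), ENNReal.ofReal (pD s x y) ∂(μ t)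
        ≤ ∫⁻ s in Set.Ioi (1:ℝ), ENNReal.ofReal (c₆ * h 1 x y) *
            ENNReal.ofReal (Real.exp (-(lamD * s))) ∂(μ t) := by
          refine setLIntegral_mono (measurable_const.mul hGmeas) (fun s hs => ?_)
          rw [← ENNReal.ofReal_mul (mul_nonneg hc₆.le hh1b.1)]
          apply ENNReal.ofReal_le_ofReal
          have h1 := (hHKlarge s x y (le_of_lt hs) hx hy).2
          calc pD s x y ≤ c₆ * Real.exp (-(lamD * s)) * h 1 x y := h1
            _ = c₆ * h 1 x y * Real.exp (-(lamD * s)) := by ring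
      _ = ENNReal.ofReal (c₆ * h 1 x y) *
            ∫⁻ s in Set.Ioi (1:ℝ), ENNReal.ofReal (Real.exp (-(lamD * s))) ∂(μ t) :=
          lintegral_const_mul _ hGmeas
      _ ≤ ENNReal.ofReal (c₆ * h 1 x y) * ENNReal.ofReal Ee := by
          apply mul_le_mul_right
          exact le_trans (setLIntegral_le_lintegral _ _) (le_of_eq hGtot)
      _ = ENNReal.ofReal (c₆ * h 1 x y * Ee) :=
          (ENNReal.ofReal_mul (mul_nonneg hc₆.le hh1b.1)).symm
  -- upper bound over (0,1]
  have hupIoc : ∫⁻ s in Set.Ioc (0:ℝ) 1, ENNReal.ofReal (pD s x y) ∂(μ t)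
      ≤ ENNReal.ofReal (M * h 1 x y * (Ee * AA * S)) := by
    calc ∫⁻ s in Set.Ioc (0:ℝ) 1, ENNReal.ofReal (pD s x y) ∂(μ t)
        ≤ ∫⁻ s in Set.Ioc (0:ℝ) 1, ENNReal.ofReal (M * h 1 x y) *
            (ENNReal.ofReal s) ^ (-κ) ∂(μ t) := by
          refine setLIntegral_mono (measurable_const.mul hκmeas) (fun s hs => ?_)
          rw [ENNReal.ofReal_rpow_of_pos hs.1,
            ← ENNReal.ofReal_mul (mul_nonneg hMpos.le hh1b.1)]
          exact ENNReal.ofReal_le_ofReal (hpDub x hx y hy s hs.1 hs.2)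
      _ = ENNReal.ofReal (M * h 1 x y) *
            ∫⁻ s in Set.Ioc (0:ℝ) 1, (ENNReal.ofReal s) ^ (-κ) ∂(μ t) :=
          lintegral_const_mul _ hκmeas
      _ ≤ ENNReal.ofReal (M * h 1 x y) * ENNReal.ofReal (Ee * AA * S) :=
          mul_le_mul_right hIocbound _
      _ = ENNReal.ofReal (M * h 1 x y * (Ee * AA * S)) :=
          (ENNReal.ofReal_mul (mul_nonneg hMpos.le hh1b.1)).symm
  -- total upper bound
  have hLup : Ltot ≤ ENNReal.ofReal (CU * (Ee * h 1 x y)) := by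
    have hcover : (Set.univ : Set ℝ) = Set.Iic 0 ∪ Set.Ioc 0 1 ∪ Set.Ioi 1 := by
      rw [Set.Iic_union_Ioc_eq_Iic zero_le_one, Set.Iic_union_Ioi]
    calc Ltot = ∫⁻ s in Set.Iic 0 ∪ Set.Ioc 0 1 ∪ Set.Ioi 1,
          ENNReal.ofReal (pD s x y) ∂(μ t) := by rw [← hcover, setLIntegral_univ]
      _ ≤ (∫⁻ s in Set.Iic 0 ∪ Set.Ioc 0 1, ENNReal.ofReal (pD s x y) ∂(μ t)) +
          ∫⁻ s in Set.Ioi 1, ENNReal.ofReal (pD s x y) ∂(μ t) := lintegral_union_le _ _ _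
      _ ≤ ((∫⁻ s in Set.Iic 0, ENNReal.ofReal (pD s x y) ∂(μ t)) +
          ∫⁻ s in Set.Ioc 0 1, ENNReal.ofReal (pD s x y) ∂(μ t)) +
          ∫⁻ s in Set.Ioi 1, ENNReal.ofReal (pD s x y) ∂(μ t) :=
          add_le_add_left (lintegral_union_le _ _ _) _
      _ ≤ (0 + ENNReal.ofReal (M * h 1 x y * (Ee * AA * S))) +
          ENNReal.ofReal (c₆ * h 1 x y * Ee) := by
          refine add_le_add (add_le_add (le_of_eq ?_) hupIoc) hupIoi
          exact setLIntegral_measure_zero _ _ hIic0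
      _ ≤ ENNReal.ofReal (CU * (Ee * h 1 x y)) := by
          rw [zero_add, ← ENNReal.ofReal_add (mul_nonneg (mul_nonneg hMpos.le hh1b.1)
            (mul_nonneg (mul_nonneg hEpos.le hAApos.le) hSnn))
            (mul_nonneg (mul_nonneg hc₆.le hh1b.1) hEpos.le)]
          apply ENNReal.ofReal_le_ofReal
          apply le_of_eq
          rw [hCUdef]
          ring
  have hLfin : Ltot ≠ ⊤ := ne_top_of_le_ne_top ENNReal.ofReal_ne_top hLup
  have hup : subq μ pD t x y ≤ C * (Ee * h 1 x y) := by
    rw [hq_eq]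
    refine le_trans (ENNReal.toReal_mono ENNReal.ofReal_ne_top hLup) ?_
    rw [ENNReal.toReal_ofReal (mul_nonneg hCUnn (mul_nonneg hEpos.le hh1b.1))]
    apply mul_le_mul_of_nonneg_right _ (mul_nonneg hEpos.le hh1b.1)
    exact le_trans (le_max_right _ _) (le_max_left _ _)
  -- lower bound
  have hlowL : ENNReal.ofReal (cL * (Ee * h 1 x y)) ≤ Ltot := by
    rcases le_or_gt t₀ t with hcase | hcase
    · -- large time
      have hIio1 : μ t (Set.Iio 1) ≤ ENNReal.ofReal (Ee / 2) := by
        refine le_trans (measure_mono Set.Iio_subset_Iic_self) ?_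
        refine le_trans (hsball (2 * lamD) 1 (by positivity)) ?_
        apply ENNReal.ofReal_le_ofReal
        rw [mul_one, hEedef, ← Real.exp_add]
        rw [show Real.exp (-(t * laplaceExp ν lamD)) / 2
            = Real.exp (-(t * laplaceExp ν lamD) - Real.log 2) by
          rw [Real.exp_sub, Real.exp_log two_pos]]
        apply Real.exp_le_exp.mpr
        have ht₀' : (2 * lamD + Real.log 2) /
            (laplaceExp ν (2 * lamD) - laplaceExp ν lamD) ≤ t :=
          le_trans (le_max_right _ _) hcase
        rw [div_le_iff₀ hδpos] at ht₀'
        linarith only [ht₀']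
      have hIioG : ∫⁻ s in Set.Iio 1, ENNReal.ofReal (Real.exp (-(lamD * s))) ∂(μ t)
          ≤ ENNReal.ofReal (Ee / 2) := by
        refine le_trans ?_ hIio1
        calc ∫⁻ s in Set.Iio 1, ENNReal.ofReal (Real.exp (-(lamD * s))) ∂(μ t)
            ≤ ∫⁻ _ in Set.Iio 1, 1 ∂(μ t) := by
              refine setLIntegral_mono_ae measurable_const.aemeasurable ?_
              filter_upwards [ae_nonneg_of hμnn] with s hs _
              exact ENNReal.ofReal_le_one.mpr (Real.exp_le_one_iff.mpr
                (neg_nonpos.mpr (mul_nonneg hlamD.le hs)))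
          _ = μ t (Set.Iio 1) := setLIntegral_one _
      have hsplitG := lintegral_add_compl
        (fun s => ENNReal.ofReal (Real.exp (-(lamD * s)))) (measurableSet_Iio (a := (1:ℝ)))
        (μ := μ t)
      rw [compl_Iio] at hsplitG
      have hIciG : ENNReal.ofReal (Ee / 2)
          ≤ ∫⁻ s in Set.Ici 1, ENNReal.ofReal (Real.exp (-(lamD * s))) ∂(μ t) := by
        have h2 : ENNReal.ofReal Ee ≤ ENNReal.ofReal (Ee / 2) +
            ∫⁻ s in Set.Ici 1, ENNReal.ofReal (Real.exp (-(lamD * s))) ∂(μ t) := by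
          calc ENNReal.ofReal Ee
              = ∫⁻ s, ENNReal.ofReal (Real.exp (-(lamD * s))) ∂(μ t) := hGtot.symm
            _ = (∫⁻ s in Set.Iio 1, ENNReal.ofReal (Real.exp (-(lamD * s))) ∂(μ t)) +
                ∫⁻ s in Set.Ici 1, ENNReal.ofReal (Real.exp (-(lamD * s))) ∂(μ t) :=
                hsplitG.symm
            _ ≤ _ := add_le_add_left hIioG _
        have h3 := tsub_le_iff_left.mpr h2
        rwa [← ENNReal.ofReal_sub _ (by linarith [hEpos] : (0:ℝ) ≤ Ee / 2),
          show Ee - Ee / 2 = Ee / 2 by ring] at h3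
      have h6 : cL * (Ee * h 1 x y) ≤ c₅ * h 1 x y * (Ee / 2) := by
        have h7 : cL * (Ee * h 1 x y) ≤ (c₅ / 2) * (Ee * h 1 x y) :=
          mul_le_mul_of_nonneg_right (min_le_left _ _) (mul_nonneg hEpos.le hh1b.1)
        linarith only [h7, (by ring : (c₅ / 2) * (Ee * h 1 x y) = c₅ * h 1 x y * (Ee / 2))]
      calc ENNReal.ofReal (cL * (Ee * h 1 x y))
          ≤ ENNReal.ofReal (c₅ * h 1 x y * (Ee / 2)) := ENNReal.ofReal_le_ofReal h6
        _ = ENNReal.ofReal (c₅ * h 1 x y) * ENNReal.ofReal (Ee / 2) :=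
            ENNReal.ofReal_mul (mul_nonneg hc₅.le hh1b.1)
        _ ≤ ENNReal.ofReal (c₅ * h 1 x y) *
            ∫⁻ s in Set.Ici 1, ENNReal.ofReal (Real.exp (-(lamD * s))) ∂(μ t) :=
            mul_le_mul_right hIciG _
        _ = ∫⁻ s in Set.Ici 1, ENNReal.ofReal (c₅ * h 1 x y) *
            ENNReal.ofReal (Real.exp (-(lamD * s))) ∂(μ t) :=
            (lintegral_const_mul _ hGmeas).symm
        _ ≤ ∫⁻ s in Set.Ici 1, ENNReal.ofReal (pD s x y) ∂(μ t) := by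
            refine setLIntegral_mono ((hpD_meas x y).ennreal_ofReal) (fun s hs => ?_)
            rw [← ENNReal.ofReal_mul (mul_nonneg hc₅.le hh1b.1)]
            apply ENNReal.ofReal_le_ofReal
            have h8 := (hHKlarge s x y hs hx hy).1
            calc c₅ * h 1 x y * Real.exp (-(lamD * s))
                = c₅ * Real.exp (-(lamD * s)) * h 1 x y := by ring
              _ ≤ pD s x y := h8
        _ ≤ Ltot := setLIntegral_le_lintegral _ _
    · -- intermediate time
      have hsmall : μ t (Set.Iio s₁) ≤ ENNReal.ofReal (1/4 : ℝ) := by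
        refine le_trans (measure_mono Set.Iio_subset_Iic_self) ?_
        refine le_trans (hsball lam₁ s₁ hlam₁pos.le) ?_
        apply ENNReal.ofReal_le_ofReal
        have h1 : Real.exp (lam₁ * s₁) ≤ 2 := by
          rw [← Real.exp_log two_pos]
          exact Real.exp_le_exp.mpr hlams₁
        have h2 : Real.exp (-(t * laplaceExp ν lam₁)) ≤ 1/8 := by
          rw [show (1/8 : ℝ) = Real.exp (-Real.log 8) by
            rw [Real.exp_neg, Real.exp_log (by norm_num : (0:ℝ) < 8)]
            norm_num]
          apply Real.exp_le_exp.mpr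
          have h4 := hlam₁
          rw [div_le_iff₀ hT] at h4
          have h10 : T * laplaceExp ν lam₁ ≤ t * laplaceExp ν lam₁ :=
            mul_le_mul_of_nonneg_right ht (hφnn lam₁ hlam₁pos.le)
          have h4' : Real.log 8 ≤ T * laplaceExp ν lam₁ := by
            rw [mul_comm]; exact h4
          linarith only [h4', h10]
        have h9 : Real.exp (lam₁ * s₁) * Real.exp (-(t * laplaceExp ν lam₁)) ≤ 2 * (1/8) :=
          mul_le_mul h1 h2 (Real.exp_pos _).le (by norm_num)
        linarith only [h9]
      have htail : μ t (Set.Ioi K) ≤ ENNReal.ofReal (1/4 : ℝ) := by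
        have hKinv : (0:ℝ) < K⁻¹ := inv_pos.mpr hKpos
        have h0 := tail_ball (μ t) hμnn hKinv (le_of_eq (inv_mul_cancel₀ hKpos.ne').symm)
        have h1 : ∫ s, (1 - Real.exp (-(K⁻¹ * s))) ∂(μ t)
            = 1 - Real.exp (-(t * laplaceExp ν K⁻¹)) := by
          rw [integral_sub (integrable_const 1) (exp_integrable (μ t) hμnn hKinv.le),
            integral_const, measureReal_def, measure_univ, ENNReal.toReal_one, smul_eq_mul, one_mul,
            hlapt K⁻¹ hKinv.le]
        have h3 : c₉ ≤ Real.exp (-(t * laplaceExp ν K⁻¹)) := by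
          rw [← Real.exp_log hc₉pos]
          apply Real.exp_le_exp.mpr
          have h5 : t * laplaceExp ν K⁻¹ ≤ t₀ * (-Real.log c₉ / t₀) :=
            mul_le_mul hcase.le hlamK.le (hφnn _ hKinv.le) ht₀pos.le
          have h6 : t₀ * (-Real.log c₉ / t₀) = -Real.log c₉ := by
            field_simp
          rw [h6] at h5
          linarith only [h5]
        have h4 : (μ t (Set.Ioi K)).toReal ≤ 1/4 := by
          rw [h1] at h0
          rw [hc₉def] at h3
          have h11 : (1 - Real.exp (-1)) * (μ t (Set.Ioi K)).toReal
              ≤ (1 - Real.exp (-1)) * (1/4) := by linarith only [h0, h3]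
          exact le_of_mul_le_mul_left h11 h1me
        calc μ t (Set.Ioi K) = ENNReal.ofReal ((μ t (Set.Ioi K)).toReal) :=
              (ENNReal.ofReal_toReal (measure_ne_top _ _)).symm
          _ ≤ ENNReal.ofReal (1/4 : ℝ) := ENNReal.ofReal_le_ofReal h4
      have hmid : ENNReal.ofReal (1/2 : ℝ) ≤ μ t (Set.Icc s₁ K) := by
        have hcover2 : (Set.univ : Set ℝ) ⊆ Set.Iio s₁ ∪ Set.Icc s₁ K ∪ Set.Ioi K := by
          intro z _
          rcases lt_or_ge z s₁ with h'|h'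
          · exact Or.inl (Or.inl h')
          rcases le_or_gt z K with h''|h''
          · exact Or.inl (Or.inr ⟨h', h''⟩)
          · exact Or.inr h''
        have hhalf : ENNReal.ofReal (1/4 : ℝ) + ENNReal.ofReal (1/4 : ℝ)
            = ENNReal.ofReal (1/2 : ℝ) := by
          rw [← ENNReal.ofReal_add (by norm_num) (by norm_num)]
          norm_num
        have h2 : (1:ℝ≥0∞) ≤ μ t (Set.Icc s₁ K) + ENNReal.ofReal (1/2 : ℝ) := by
          calc (1:ℝ≥0∞) = μ t Set.univ := measure_univ.symm
            _ ≤ μ t (Set.Iio s₁ ∪ Set.Icc s₁ K ∪ Set.Ioi K) := measure_mono hcover2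
            _ ≤ μ t (Set.Iio s₁) + μ t (Set.Icc s₁ K) + μ t (Set.Ioi K) :=
                le_trans (measure_union_le _ _) (add_le_add_left (measure_union_le _ _) _)
            _ ≤ ENNReal.ofReal (1/4 : ℝ) + μ t (Set.Icc s₁ K) + ENNReal.ofReal (1/4 : ℝ) :=
                add_le_add (add_le_add hsmall le_rfl) htail
            _ = μ t (Set.Icc s₁ K) + ENNReal.ofReal (1/2 : ℝ) := by
                rw [← hhalf]
                ring
        have h3 := tsub_le_iff_right.mpr h2
        rwa [show (1:ℝ≥0∞) = ENNReal.ofReal 1 by rw [ENNReal.ofReal_one],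
          ← ENNReal.ofReal_sub _ (by norm_num : (0:ℝ) ≤ 1/2),
          show (1:ℝ) - 1/2 = 1/2 by norm_num] at h3
      have h6 : cL * (Ee * h 1 x y) ≤ c_mid * h 1 x y * (1/2) := by
        have h7 : Ee * h 1 x y ≤ h 1 x y := mul_le_of_le_one_left hh1b.1 hEle1
        have h8 : cL * (Ee * h 1 x y) ≤ (c_mid/2) * (Ee * h 1 x y) :=
          mul_le_mul_of_nonneg_right (min_le_right _ _) (mul_nonneg hEpos.le hh1b.1)
        have h9 : (c_mid/2) * (Ee * h 1 x y) ≤ (c_mid/2) * h 1 x y :=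
          mul_le_mul_of_nonneg_left h7 (by linarith)
        linarith only [h8, h9,
          (by ring : (c_mid/2) * h 1 x y = c_mid * h 1 x y * (1/2))]
      calc ENNReal.ofReal (cL * (Ee * h 1 x y))
          ≤ ENNReal.ofReal (c_mid * h 1 x y * (1/2)) := ENNReal.ofReal_le_ofReal h6
        _ = ENNReal.ofReal (c_mid * h 1 x y) * ENNReal.ofReal (1/2 : ℝ) :=
            ENNReal.ofReal_mul (mul_nonneg hcmidpos.le hh1b.1)
        _ ≤ ENNReal.ofReal (c_mid * h 1 x y) * μ t (Set.Icc s₁ K) :=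
            mul_le_mul_right hmid _
        _ = ∫⁻ _ in Set.Icc s₁ K, ENNReal.ofReal (c_mid * h 1 x y) ∂(μ t) :=
            (setLIntegral_const _ _).symm
        _ ≤ ∫⁻ s in Set.Icc s₁ K, ENNReal.ofReal (pD s x y) ∂(μ t) := by
            refine setLIntegral_mono ((hpD_meas x y).ennreal_ofReal) (fun s hs => ?_)
            exact ENNReal.ofReal_le_ofReal (hpDmid x hx y hy s hs.1 hs.2)
        _ ≤ Ltot := setLIntegral_le_lintegral _ _
  have hlow : C⁻¹ * (Ee * h 1 x y) ≤ subq μ pD t x y := by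
    rw [hq_eq]
    have h1 : cL * (Ee * h 1 x y) ≤ Ltot.toReal := by
      have h2 := ENNReal.toReal_mono hLfin hlowL
      rwa [ENNReal.toReal_ofReal (mul_nonneg hcLpos.le (mul_nonneg hEpos.le hh1b.1))] at h2
    refine le_trans ?_ h1
    apply mul_le_mul_of_nonneg_right _ (mul_nonneg hEpos.le hh1b.1)
    have h3 : cL⁻¹ ≤ C := le_trans (le_max_left _ _) (le_max_left _ _)
    calc C⁻¹ ≤ (cL⁻¹)⁻¹ := inv_anti₀ (inv_pos.mpr hcLpos) h3
      _ = cL := inv_inv cL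
  exact ⟨hlow, hup⟩
end
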